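/- arXiv:1904.12982 — 3 statements merged into one kernel-verified Lean document; each statement's English description precedes it below -/
import Mathlib

section
/- Assume additionally that tr B ≥ 0. Then there exists a constant c₁ > 0 such that V(t) ≥ c₁·t for all t ≥ 1. -/
open MeasureTheory Matrix Real
open scoped ENNReal Topology

noncomputable section

/-- The covariance matrix `K(t) = (1/t) ∫₀ᵗ e^{sB} Q e^{sBᵀ} ds`. -/
def hK {N : ℕ} (Q B : Matrix (Fin N) (Fin N) ℝ) (t : ℝ) : Matrix (Fin N) (Fin N) ℝ :=
  Matrix.of fun i j =>
    (1 / t) * ∫ s in (0:ℝ)..t, (NormedSpace.exp (s • B) * Q * NormedSpace.exp (s • Bᵀ)) i j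

/-- The intertwined pseudo-distance `m_t(X,Y) = ⟨K(t)⁻¹(Y - e^{tB}X), Y - e^{tB}X⟩^{1/2}`. -/
def hm {N : ℕ} (Q B : Matrix (Fin N) (Fin N) ℝ) (t : ℝ) (X Y : Fin N → ℝ) : ℝ :=
  Real.sqrt (dotProduct ((hK Q B t)⁻¹.mulVec (Y - (NormedSpace.exp (t • B)).mulVec X))
    (Y - (NormedSpace.exp (t • B)).mulVec X))

/-- The volume of the unit ball in `ℝᴺ`. -/
def omegaN (N : ℕ) : ℝ := (volume (Metric.ball (0 : EuclideanSpace ℝ (Fin N)) 1)).toReal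

/-- The volume function `V(t) = ω_N (det (t K(t)))^{1/2}`. -/
def hV {N : ℕ} (Q B : Matrix (Fin N) (Fin N) ℝ) (t : ℝ) : ℝ :=
  omegaN N * Real.sqrt ((t • hK Q B t).det)

/-- Hörmander's kernel `p(X,Y,t) = (4π)^{-N/2} ω_N V(t)⁻¹ exp(-m_t(X,Y)²/(4t))`. -/
def hkernel {N : ℕ} (Q B : Matrix (Fin N) (Fin N) ℝ) (X Y : Fin N → ℝ) (t : ℝ) : ℝ :=
  ((4 * π) ^ (-(N : ℝ) / 2) * omegaN N / hV Q B t) * Real.exp (-(hm Q B t X Y) ^ 2 / (4 * t))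

/-- The Hörmander semigroup `P_t f(X) = ∫ p(X,Y,t) f(Y) dY`. -/
def hP {N : ℕ} (Q B : Matrix (Fin N) (Fin N) ℝ) (t : ℝ) (f : (Fin N → ℝ) → ℝ)
    (X : Fin N → ℝ) : ℝ :=
  ∫ Y, hkernel Q B X Y t * f Y

/-- The Riesz potential `ℐ_α f(X) = Γ(α/2)⁻¹ ∫₀^∞ t^{α/2-1} P_t f(X) dt`. -/
def riesz {N : ℕ} (Q B : Matrix (Fin N) (Fin N) ℝ) (α : ℝ) (f : (Fin N → ℝ) → ℝ)
    (X : Fin N → ℝ) : ℝ :=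
  (1 / Real.Gamma (α / 2)) * ∫ t in Set.Ioi (0:ℝ), t ^ (α / 2 - 1) * hP Q B t f X

/-- The Poisson semigroup `𝒫_z f(X) = (4π)^{-1/2} ∫₀^∞ z t^{-3/2} e^{-z²/(4t)} P_t f(X) dt`. -/
def poisson {N : ℕ} (Q B : Matrix (Fin N) (Fin N) ℝ) (z : ℝ) (f : (Fin N → ℝ) → ℝ)
    (X : Fin N → ℝ) : ℝ :=
  (4 * π) ^ (-(1:ℝ) / 2) *
    ∫ t in Set.Ioi (0:ℝ), z * t ^ (-(3:ℝ) / 2) * Real.exp (-(z ^ 2) / (4 * t)) * hP Q B t f X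

/-- The Poisson radial maximal function `ℳ* f(X) = sup_{z>0} |𝒫_z f(X)|`. -/
def maxP {N : ℕ} (Q B : Matrix (Fin N) (Fin N) ℝ) (f : (Fin N → ℝ) → ℝ)
    (X : Fin N → ℝ) : ℝ :=
  ⨆ z : {z : ℝ // 0 < z}, |poisson Q B z.1 f X|

/-- The fractional power `(-𝒜)^s f(X) = -(s/Γ(1-s)) ∫₀^∞ t^{-(1+s)} (P_t f(X) - f(X)) dt`. -/
def fracA {N : ℕ} (Q B : Matrix (Fin N) (Fin N) ℝ) (s : ℝ) (f : (Fin N → ℝ) → ℝ)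
    (X : Fin N → ℝ) : ℝ :=
  -(s / Real.Gamma (1 - s)) * ∫ t in Set.Ioi (0:ℝ), t ^ (-(1 + s)) * (hP Q B t f X - f X)

/-- The degenerate Ornstein-Uhlenbeck operator `𝒜 f = tr(Q ∇²f) + ⟨BX, ∇f⟩`. -/
def opA {N : ℕ} (Q B : Matrix (Fin N) (Fin N) ℝ) (f : (Fin N → ℝ) → ℝ)
    (X : Fin N → ℝ) : ℝ :=
  (∑ i, ∑ j, Q i j * fderiv ℝ (fun Y => fderiv ℝ f Y (Pi.single j 1)) X (Pi.single i 1)) +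
    ∑ i, B.mulVec X i * fderiv ℝ f X (Pi.single i 1)


section AuxVolumeLinearGrowth

open NormedSpace

variable {N : ℕ}




lemma entry_differentiable (i j : Fin N) :
    letI : SeminormedRing (Matrix (Fin N) (Fin N) ℝ) := Matrix.linftyOpSemiNormedRing
    letI : NormedRing (Matrix (Fin N) (Fin N) ℝ) := Matrix.linftyOpNormedRing
    letI : NormedAlgebra ℝ (Matrix (Fin N) (Fin N) ℝ) := Matrix.linftyOpNormedAlgebra
    Differentiable ℝ (fun A : Matrix (Fin N) (Fin N) ℝ => A i j) := by
  letI : SeminormedRing (Matrix (Fin N) (Fin N) ℝ) := Matrix.linftyOpSemiNormedRing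
  letI : NormedRing (Matrix (Fin N) (Fin N) ℝ) := Matrix.linftyOpNormedRing
  letI : NormedAlgebra ℝ (Matrix (Fin N) (Fin N) ℝ) := Matrix.linftyOpNormedAlgebra
  let lm : Matrix (Fin N) (Fin N) ℝ →ₗ[ℝ] ℝ :=
    (LinearMap.proj j).comp (LinearMap.proj (R := ℝ) (φ := fun _ : Fin N => Fin N → ℝ) i)
  exact (LinearMap.toContinuousLinearMap lm).differentiable

lemma det_differentiable :
    letI : SeminormedRing (Matrix (Fin N) (Fin N) ℝ) := Matrix.linftyOpSemiNormedRing
    letI : NormedRing (Matrix (Fin N) (Fin N) ℝ) := Matrix.linftyOpNormedRing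
    letI : NormedAlgebra ℝ (Matrix (Fin N) (Fin N) ℝ) := Matrix.linftyOpNormedAlgebra
    Differentiable ℝ (fun A : Matrix (Fin N) (Fin N) ℝ => A.det) := by
  letI : SeminormedRing (Matrix (Fin N) (Fin N) ℝ) := Matrix.linftyOpSemiNormedRing
  letI : NormedRing (Matrix (Fin N) (Fin N) ℝ) := Matrix.linftyOpNormedRing
  letI : NormedAlgebra ℝ (Matrix (Fin N) (Fin N) ℝ) := Matrix.linftyOpNormedAlgebra
  simp_rw [Matrix.det_apply']
  apply Differentiable.fun_sum
  intro σ _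
  apply Differentiable.const_mul
  intro A
  exact (HasFDerivAt.finset_prod
    (fun i _ => ((entry_differentiable (σ i) i) A).hasFDerivAt)).differentiableAt

lemma hasDerivAt_det_one_add_smul (M : Matrix (Fin N) (Fin N) ℝ) :
    HasDerivAt (fun h : ℝ => ((1 : Matrix (Fin N) (Fin N) ℝ) + h • M).det) M.trace 0 := by
  have hfun : (fun h : ℝ => ((1 : Matrix (Fin N) (Fin N) ℝ) + h • M).det) =
      fun h : ℝ => 1 + M.trace * h +
        ((Matrix.det (1 + (Polynomial.X : Polynomial ℝ) • M.map Polynomial.C)).divX.divX).eval h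
          * h ^ 2 := by
    funext h
    exact Matrix.det_one_add_smul h M
  rw [hfun]
  set p := (Matrix.det (1 + (Polynomial.X : Polynomial ℝ) • M.map Polynomial.C)).divX.divX
  have h1 : HasDerivAt (fun h : ℝ => 1 + M.trace * h) M.trace 0 := by
    simpa using ((hasDerivAt_id (0:ℝ)).const_mul M.trace).const_add (1:ℝ)
  have h2 : HasDerivAt (fun h : ℝ => p.eval h * h ^ 2)
      (p.derivative.eval 0 * 0 ^ 2 + p.eval 0 * (2 * 0 ^ 1)) 0 :=
    (p.hasDerivAt 0).mul (hasDerivAt_pow 2 (0:ℝ))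
  simpa using h1.fun_add h2

lemma det_exp_eq (B : Matrix (Fin N) (Fin N) ℝ) (t : ℝ) :
    (exp (t • B)).det = Real.exp (t * B.trace) := by
  letI : SeminormedRing (Matrix (Fin N) (Fin N) ℝ) := Matrix.linftyOpSemiNormedRing
  letI : NormedRing (Matrix (Fin N) (Fin N) ℝ) := Matrix.linftyOpNormedRing
  letI : NormedAlgebra ℝ (Matrix (Fin N) (Fin N) ℝ) := Matrix.linftyOpNormedAlgebra
  have hdet := det_differentiable (N := N)
  -- identify the fderiv of det at 1 in direction M with the trace
  have fderiv_det_one : ∀ M : Matrix (Fin N) (Fin N) ℝ,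
      (fderiv ℝ (fun A : Matrix (Fin N) (Fin N) ℝ => A.det) 1) M = M.trace := by
    intro M
    have hcurve : HasDerivAt (fun h : ℝ => (1 : Matrix (Fin N) (Fin N) ℝ) + h • M) M 0 := by
      have := ((hasDerivAt_id (0:ℝ)).smul_const M).const_add (1 : Matrix (Fin N) (Fin N) ℝ)
      simp only [id_eq, one_smul] at this; exact this
    have h1 : HasFDerivAt (fun A : Matrix (Fin N) (Fin N) ℝ => A.det)
        (fderiv ℝ (fun A : Matrix (Fin N) (Fin N) ℝ => A.det) 1)
        ((1 : Matrix (Fin N) (Fin N) ℝ) + (0:ℝ) • M) := by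
      simpa using (hdet 1).hasFDerivAt
    exact (h1.comp_hasDerivAt 0 hcurve).unique (hasDerivAt_det_one_add_smul M)
  -- derivative of φ h = det (exp (h • B)) at 0 is trace B
  have hφ0 : HasDerivAt (fun h : ℝ => (exp (h • B)).det) B.trace 0 := by
    have hc : HasDerivAt (fun h : ℝ => exp (h • B)) B 0 := by
      have := hasDerivAt_exp_smul_const B (0:ℝ)
      rw [zero_smul, NormedSpace.exp_zero, one_mul] at this; exact this
    have h1 : HasFDerivAt (fun A : Matrix (Fin N) (Fin N) ℝ => A.det)
        (fderiv ℝ (fun A : Matrix (Fin N) (Fin N) ℝ => A.det) 1) (exp ((0:ℝ) • B)) := by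
      rw [zero_smul, NormedSpace.exp_zero]
      exact (hdet 1).hasFDerivAt
    have := h1.comp_hasDerivAt 0 hc
    rw [← fderiv_det_one B]; exact this
  -- derivative of g at any point
  have hg : ∀ u : ℝ, HasDerivAt (fun h : ℝ => (exp (h • B)).det)
      (B.trace * (exp (u • B)).det) u := by
    intro u
    have hfun : (fun h : ℝ => (exp (h • B)).det) =
        fun h : ℝ => (exp (u • B)).det * (exp ((h - u) • B)).det := by
      funext h
      rw [← Matrix.det_mul,
        ← Matrix.exp_add_of_commute _ _ (((Commute.refl B).smul_left u).smul_right (h - u))]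
      congr 2
      module
    rw [hfun]
    have hshift : HasDerivAt (fun h : ℝ => (exp ((h - u) • B)).det) B.trace u := by
      have hsub : HasDerivAt (fun h : ℝ => h - u) 1 u := by
        simpa using (hasDerivAt_id u).sub_const u
      have := HasDerivAt.comp_of_eq (h := fun h : ℝ => h - u) u hφ0 hsub (by simp)
      simpa [Function.comp_def] using this
    simpa [mul_comm] using hshift.const_mul ((exp (u • B)).det)
  -- F = g * exp(-(t * trace)) is constant
  have hF : ∀ u : ℝ, HasDerivAt
      (fun h : ℝ => (exp (h • B)).det * Real.exp (-(h * B.trace))) 0 u := by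
    intro u
    have hlin : HasDerivAt (fun h : ℝ => -(h * B.trace)) (-B.trace) u :=
      (hasDerivAt_mul_const B.trace).neg
    have h2 : HasDerivAt (fun h : ℝ => Real.exp (-(h * B.trace)))
        (Real.exp (-(u * B.trace)) * -B.trace) u := by
      exact (Real.hasDerivAt_exp (-(u * B.trace))).comp u hlin
    have := (hg u).fun_mul h2
    have e : (0:ℝ) = B.trace * (exp (u • B)).det * Real.exp (-(u * B.trace))
        + (exp (u • B)).det * (Real.exp (-(u * B.trace)) * -B.trace) := by ring
    rw [e]; exact this
  have h0 : (exp (t • B)).det * Real.exp (-(t * B.trace)) = 1 := by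
    have := is_const_of_deriv_eq_zero (fun x => (hF x).differentiableAt)
      (fun x => (hF x).deriv) t 0
    simpa using this
  have h1 : (exp (t • B)).det * (Real.exp (-(t * B.trace)) * Real.exp (t * B.trace))
      = Real.exp (t * B.trace) := by
    rw [← mul_assoc, h0, one_mul]
  simpa [← Real.exp_add] using h1




lemma scalar_key {N : ℕ} (hN : 2 ≤ N) (lam : Fin N → ℝ) (hlam : ∀ i, 0 ≤ lam i) :
    1 + Real.sqrt (∏ i, lam i) ≤ Real.sqrt (∏ i, (1 + lam i)) := by
  have h0N : (0:ℕ) < N := by omega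
  have h1N : (1:ℕ) < N := by omega
  set i0 : Fin N := ⟨0, h0N⟩
  set i1 : Fin N := ⟨1, h1N⟩
  have hne : i1 ≠ i0 := by simp [i0, i1, Fin.ext_iff]
  have hmem1 : i1 ∈ Finset.univ.erase i0 := Finset.mem_erase.2 ⟨hne, Finset.mem_univ _⟩
  set s : Finset (Fin N) := (Finset.univ.erase i0).erase i1 with hs
  have hsplit : ∀ f : Fin N → ℝ, ∏ i, f i = f i0 * (f i1 * ∏ i ∈ s, f i) := by
    intro f
    rw [← Finset.mul_prod_erase _ f (Finset.mem_univ i0), ← Finset.mul_prod_erase _ f hmem1]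
  set a := lam i0
  set b := lam i1
  set P := ∏ i ∈ s, lam i with hP
  set R := ∏ i ∈ s, (1 + lam i) with hR
  have ha : 0 ≤ a := hlam i0
  have hb : 0 ≤ b := hlam i1
  have hPnn : 0 ≤ P := Finset.prod_nonneg fun i _ => hlam i
  have hRone : 1 ≤ R := by
    rw [hR]
    calc (1:ℝ) = ∏ _i ∈ s, (1:ℝ) := (Finset.prod_const_one).symm
    _ ≤ ∏ i ∈ s, (1 + lam i) :=
      Finset.prod_le_prod (fun i _ => zero_le_one) (fun i _ => by linarith [hlam i])
  have hPR : P ≤ R := Finset.prod_le_prod (fun i _ => hlam i) (fun i _ => by linarith [hlam i])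
  rw [hsplit lam, hsplit (fun i => 1 + lam i)]
  have hsR : 1 ≤ Real.sqrt R := by
    rw [show (1:ℝ) = Real.sqrt 1 by simp]
    exact Real.sqrt_le_sqrt hRone
  have step1 : Real.sqrt (a * (b * P)) ≤ Real.sqrt (a * b) * Real.sqrt R := by
    rw [← Real.sqrt_mul (by positivity)]
    apply Real.sqrt_le_sqrt
    calc a * (b * P) = a * b * P := by ring
    _ ≤ a * b * R := mul_le_mul_of_nonneg_left hPR (mul_nonneg ha hb)
  have core : 1 + Real.sqrt (a * b) ≤ Real.sqrt ((1 + a) * (1 + b)) := by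
    rw [Real.le_sqrt (by positivity) (by positivity)]
    have h2 : 2 * Real.sqrt a * Real.sqrt b ≤ a + b := by
      nlinarith [sq_nonneg (Real.sqrt a - Real.sqrt b), Real.sq_sqrt ha, Real.sq_sqrt hb]
    have hab : Real.sqrt (a * b) = Real.sqrt a * Real.sqrt b := Real.sqrt_mul ha b
    nlinarith [Real.sq_sqrt (mul_nonneg ha hb), Real.sqrt_nonneg (a*b)]
  calc 1 + Real.sqrt (a * (b * P)) ≤ 1 + Real.sqrt (a * b) * Real.sqrt R := by linarith
  _ ≤ (1 + Real.sqrt (a * b)) * Real.sqrt R := by nlinarith [Real.sqrt_nonneg (a*b)]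
  _ ≤ Real.sqrt ((1 + a) * (1 + b)) * Real.sqrt R := by
      apply mul_le_mul_of_nonneg_right core (by positivity)
  _ = Real.sqrt ((1 + a) * ((1 + b) * R)) := by
      rw [← Real.sqrt_mul (by positivity)]; ring_nf

lemma sqrt_det_one_add {N : ℕ} (hN : 2 ≤ N) {T : Matrix (Fin N) (Fin N) ℝ}
    (hT : T.PosSemidef) :
    1 + Real.sqrt T.det ≤ Real.sqrt ((1 + T).det) := by
  have hH := hT.1
  set U : Matrix (Fin N) (Fin N) ℝ := (Matrix.IsHermitian.eigenvectorUnitary hH : Matrix (Fin N) (Fin N) ℝ) with hU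
  have hUU : U * star U = 1 := (Matrix.mem_unitaryGroup_iff).mp (Matrix.IsHermitian.eigenvectorUnitary hH).2
  set lam := hH.eigenvalues
  have hlam : ∀ i, 0 ≤ lam i := hT.eigenvalues_nonneg
  have hspec : T = U * Matrix.diagonal (RCLike.ofReal ∘ lam) * star U := by
    have := hH.spectral_theorem; rw [Unitary.conjStarAlgAut_apply] at this; exact this
  have hone : (1 : Matrix (Fin N) (Fin N) ℝ) + T = U * (1 + Matrix.diagonal (RCLike.ofReal ∘ lam)) * star U := by
    rw [mul_add, add_mul, mul_one, hUU, ← hspec]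
  have hdet1 : ((1 : Matrix (Fin N) (Fin N) ℝ) + T).det = ∏ i, (1 + lam i) := by
    rw [hone, Matrix.det_mul_right_comm, hUU, one_mul]
    have : (1 : Matrix (Fin N) (Fin N) ℝ) + Matrix.diagonal (RCLike.ofReal ∘ lam)
        = Matrix.diagonal (fun i => 1 + lam i) := by
      rw [← Matrix.diagonal_one, Matrix.diagonal_add]
      congr 1
    rw [this, Matrix.det_diagonal]
  have hdet2 : T.det = ∏ i, lam i := by
    simpa using hH.det_eq_prod_eigenvalues
  rw [hdet1, hdet2]
  exact scalar_key hN lam hlam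

open scoped MatrixOrder in
lemma sqrt_det_add {N : ℕ} (hN : 2 ≤ N) {A B : Matrix (Fin N) (Fin N) ℝ}
    (hA : A.PosDef) (hB : B.PosSemidef) :
    Real.sqrt A.det + Real.sqrt B.det ≤ Real.sqrt ((A + B).det) := by
  have hApsd := hA.posSemidef
  set S := CFC.sqrt A with hSdef
  have hS : S.PosSemidef := (CFC.sqrt_nonneg A).posSemidef
  have hSS : S * S = A := CFC.sqrt_mul_sqrt_self A hApsd.nonneg
  have hdetA : S.det * S.det = A.det := by rw [← Matrix.det_mul, hSS]
  have hAdet : 0 < A.det := hA.det_pos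
  have hSdet : IsUnit S.det := by
    have : S.det ≠ 0 := by intro h; rw [h, mul_zero] at hdetA; linarith
    exact Ne.isUnit this
  have hSH : Sᴴ = S := hS.1
  have hSiH : (S⁻¹)ᴴ = S⁻¹ := by rw [Matrix.conjTranspose_nonsing_inv, hSH]
  set T := S⁻¹ * B * S⁻¹ with hT
  have hTpsd : T.PosSemidef := by
    have := hB.mul_mul_conjTranspose_same S⁻¹
    rwa [hSiH] at this
  have hST : S * T * S = B := by
    rw [hT]
    calc S * (S⁻¹ * B * S⁻¹) * S = (S * S⁻¹) * B * (S⁻¹ * S) := by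
          simp only [Matrix.mul_assoc]
    _ = B := by rw [Matrix.mul_nonsing_inv _ hSdet, Matrix.nonsing_inv_mul _ hSdet, one_mul, mul_one]
  have hsum : A + B = S * (1 + T) * S := by
    rw [mul_add, add_mul, mul_one, hSS, hST]
  have hdetsum : (A + B).det = A.det * (1 + T).det := by
    rw [hsum, Matrix.det_mul, Matrix.det_mul, ← hdetA]; ring
  have hdetB : B.det = A.det * T.det := by
    rw [← hST, Matrix.det_mul, Matrix.det_mul, ← hdetA]; ring
  rw [hdetsum, hdetB, Real.sqrt_mul hAdet.le, Real.sqrt_mul hAdet.le]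
  have key := sqrt_det_one_add hN hTpsd
  nlinarith [Real.sqrt_nonneg A.det, Real.sqrt_nonneg T.det, Real.sqrt_nonneg ((1+T).det),
    Real.sqrt_pos.mpr hAdet]
-- integrand and integral matrices
def Gmat {N : ℕ} (Q B : Matrix (Fin N) (Fin N) ℝ) (s : ℝ) : Matrix (Fin N) (Fin N) ℝ :=
  NormedSpace.exp (s • B) * Q * NormedSpace.exp (s • Bᵀ)

def Jmat {N : ℕ} (Q B : Matrix (Fin N) (Fin N) ℝ) (a b : ℝ) : Matrix (Fin N) (Fin N) ℝ :=
  Matrix.of fun i j => ∫ s in a..b, Gmat Q B s i j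

variable {N : ℕ} (Q B : Matrix (Fin N) (Fin N) ℝ)

lemma exp_entry_continuous (C : Matrix (Fin N) (Fin N) ℝ) (i j : Fin N) :
    Continuous fun s : ℝ => (exp (s • C)) i j := by
  letI : SeminormedRing (Matrix (Fin N) (Fin N) ℝ) := Matrix.linftyOpSemiNormedRing
  letI : NormedRing (Matrix (Fin N) (Fin N) ℝ) := Matrix.linftyOpNormedRing
  letI : NormedAlgebra ℝ (Matrix (Fin N) (Fin N) ℝ) := Matrix.linftyOpNormedAlgebra
  have h1 : Continuous fun s : ℝ => exp (s • C) := by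
    rw [continuous_iff_continuousAt]
    exact fun t => (hasDerivAt_exp_smul_const C t).continuousAt
  let lm : Matrix (Fin N) (Fin N) ℝ →ₗ[ℝ] ℝ :=
    (LinearMap.proj j).comp (LinearMap.proj (R := ℝ) (φ := fun _ : Fin N => Fin N → ℝ) i)
  exact (LinearMap.toContinuousLinearMap lm).continuous.comp h1

lemma Gmat_entry_continuous (i j : Fin N) :
    Continuous fun s : ℝ => Gmat Q B s i j := by
  simp only [Gmat, Matrix.mul_apply]
  apply continuous_finset_sum
  intro b _
  apply Continuous.mul
  · apply continuous_finset_sum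
    intro a _
    exact (exp_entry_continuous B i a).mul continuous_const
  · exact exp_entry_continuous Bᵀ b j

lemma Gmat_integrable (i j : Fin N) (a b : ℝ) :
    IntervalIntegrable (fun s => Gmat Q B s i j) volume a b :=
  (Gmat_entry_continuous Q B i j).intervalIntegrable a b

lemma Jmat_add (a b c : ℝ) : Jmat Q B a b + Jmat Q B b c = Jmat Q B a c := by
  ext i j
  simp only [Jmat, Matrix.add_apply, Matrix.of_apply]
  exact intervalIntegral.integral_add_adjacent_intervals
    (Gmat_integrable Q B i j a b) (Gmat_integrable Q B i j b c)

lemma Gmat_shift (k u : ℝ) :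
    Gmat Q B (k + u) = exp (k • B) * Gmat Q B u * (exp (k • B))ᵀ := by
  unfold Gmat
  have h1 : exp ((k + u) • B) = exp (k • B) * exp (u • B) := by
    rw [add_smul]
    exact Matrix.exp_add_of_commute _ _ (((Commute.refl B).smul_left k).smul_right u)
  have h2 : exp ((k + u) • Bᵀ) = exp (u • Bᵀ) * (exp (k • B))ᵀ := by
    rw [add_smul, add_comm]
    rw [Matrix.exp_add_of_commute _ _ (((Commute.refl Bᵀ).smul_left u).smul_right k)]
    congr 1
    rw [← Matrix.transpose_smul, Matrix.exp_transpose]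
  rw [h1, h2]
  simp only [Matrix.mul_assoc]

lemma Jmat_piece (k : ℝ) :
    Jmat Q B k (k + 1) = exp (k • B) * Jmat Q B 0 1 * (exp (k • B))ᵀ := by
  set E := exp (k • B)
  ext i j
  have hshift : (∫ s in k..(k+1), Gmat Q B s i j) = ∫ u in (0:ℝ)..1, Gmat Q B (k + u) i j := by
    rw [intervalIntegral.integral_comp_add_left (fun s => Gmat Q B s i j) k]
    norm_num
  have hEE : ∀ u : ℝ, Gmat Q B (k + u) i j
      = ∑ b, (∑ a, E i a * Gmat Q B u a b) * Eᵀ b j := by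
    intro u
    rw [Gmat_shift]
    simp [Matrix.mul_apply, E]
  simp only [Jmat, Matrix.of_apply]
  rw [hshift]
  have hint : ∀ b : Fin N, IntervalIntegrable
      (fun u => (∑ a, E i a * Gmat Q B u a b) * Eᵀ b j) volume 0 1 := by
    intro b
    apply Continuous.intervalIntegrable
    apply Continuous.mul _ continuous_const
    exact continuous_finset_sum _ fun a _ =>
      continuous_const.mul (Gmat_entry_continuous Q B a b)
  calc (∫ u in (0:ℝ)..1, Gmat Q B (k + u) i j)
      = ∫ u in (0:ℝ)..1, ∑ b, (∑ a, E i a * Gmat Q B u a b) * Eᵀ b j := by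
        apply intervalIntegral.integral_congr
        intro u _
        exact hEE u
    _ = ∑ b, ∫ u in (0:ℝ)..1, (∑ a, E i a * Gmat Q B u a b) * Eᵀ b j := by
        exact intervalIntegral.integral_finset_sum (fun b _ => hint b)
    _ = ∑ b, (∑ a, E i a * ∫ u in (0:ℝ)..1, Gmat Q B u a b) * Eᵀ b j := by
        apply Finset.sum_congr rfl
        intro b _
        rw [intervalIntegral.integral_mul_const]
        congr 1
        rw [intervalIntegral.integral_finset_sum
          (fun a _ => (Gmat_integrable Q B a b 0 1).const_mul (E i a))]
        apply Finset.sum_congr rfl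
        intro a _
        exact intervalIntegral.integral_const_mul _ _
    _ = (E * Jmat Q B 0 1 * Eᵀ) i j := by
        simp [Matrix.mul_apply, Jmat]

lemma Gmat_posSemidef (hQ : Q.PosSemidef) (s : ℝ) : (Gmat Q B s).PosSemidef := by
  have h : Gmat Q B s = exp (s • B) * Q * (exp (s • B))ᴴ := by
    unfold Gmat
    rw [Matrix.conjTranspose_eq_transpose_of_trivial, ← Matrix.exp_transpose,
      ← Matrix.transpose_smul]
  rw [h]
  exact hQ.mul_mul_conjTranspose_same _

lemma dot_Jmat (a b : ℝ) (x : Fin N → ℝ) :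
    dotProduct x ((Jmat Q B a b) *ᵥ x)
      = ∫ s in a..b, dotProduct x ((Gmat Q B s) *ᵥ x) := by
  simp only [dotProduct, Matrix.mulVec, Jmat, Matrix.of_apply]
  have hint1 : ∀ i : Fin N, IntervalIntegrable
      (fun s => x i * ∑ j, Gmat Q B s i j * x j) volume a b := by
    intro i
    apply Continuous.intervalIntegrable
    exact continuous_const.mul (continuous_finset_sum _ fun j _ =>
      (Gmat_entry_continuous Q B i j).mul continuous_const)
  rw [intervalIntegral.integral_finset_sum (fun i _ => hint1 i)]
  apply Finset.sum_congr rfl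
  intro i _
  rw [intervalIntegral.integral_const_mul]
  congr 1
  rw [intervalIntegral.integral_finset_sum (fun j _ =>
    ((Gmat_integrable Q B i j a b).mul_const (x j)))]
  apply Finset.sum_congr rfl
  intro j _
  exact (intervalIntegral.integral_mul_const _ _).symm

lemma Jmat_isHermitian (hQ : Q.PosSemidef) (a b : ℝ) : (Jmat Q B a b).IsHermitian := by
  have hsym : ∀ s : ℝ, (Gmat Q B s).IsHermitian := fun s => (Gmat_posSemidef Q B hQ s).1
  unfold Matrix.IsHermitian
  ext i j
  rw [Matrix.conjTranspose_apply]
  simp only [Jmat, Matrix.of_apply, star_trivial]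
  congr 1
  funext s
  have := hsym s
  calc Gmat Q B s j i = (Gmat Q B s)ᴴ j i := by rw [this]
  _ = Gmat Q B s i j := by rw [Matrix.conjTranspose_apply, star_trivial]

lemma Jmat_posSemidef (hQ : Q.PosSemidef) {a b : ℝ} (hab : a ≤ b) :
    (Jmat Q B a b).PosSemidef := by
  refine Matrix.PosSemidef.of_dotProduct_mulVec_nonneg (Jmat_isHermitian Q B hQ a b) fun x => ?_
  rw [star_trivial, dot_Jmat]
  apply intervalIntegral.integral_nonneg hab
  intro s _
  have := (Gmat_posSemidef Q B hQ s).dotProduct_mulVec_nonneg x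
  rwa [star_trivial] at this

lemma posDef_smul {M : Matrix (Fin N) (Fin N) ℝ} (hM : M.PosDef) {c : ℝ} (hc : 0 < c) :
    (c • M).PosDef := by
  exact hM.smul hc

lemma Jmat_eq_smul_hK {t : ℝ} (ht : t ≠ 0) : Jmat Q B 0 t = t • hK Q B t := by
  ext i j
  simp only [Jmat, hK, Matrix.of_apply, Matrix.smul_apply, smul_eq_mul, Gmat]
  field_simp

lemma Jmat_posDef (hHor : ∀ t > 0, (hK Q B t).PosDef) {t : ℝ} (ht : 0 < t) :
    (Jmat Q B 0 t).PosDef := by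
  rw [Jmat_eq_smul_hK Q B ht.ne']
  exact posDef_smul (hHor t ht) ht


end AuxVolumeLinearGrowth

/-- if `tr B ≥ 0` then `V(t)` grows at least linearly at infinity. -/
theorem volume_linear_growth
    (N : ℕ) (hN : 2 ≤ N) (Q B : Matrix (Fin N) (Fin N) ℝ)
    (hQ : Q.PosSemidef)
    (hHor : ∀ t > 0, (hK Q B t).PosDef)
    (htr : 0 ≤ B.trace) :
    ∃ c₁ > (0:ℝ), ∀ t ≥ (1:ℝ), c₁ * t ≤ hV Q B t := by
  set d : ℝ := (Jmat Q B 0 1).det with hd_def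
  have hd : 0 < d := (Jmat_posDef Q B hHor one_pos).det_pos
  have hω : 0 < omegaN N := by
    unfold omegaN
    refine ENNReal.toReal_pos (Metric.measure_ball_pos volume _ one_pos).ne' ?_
    exact (measure_ball_lt_top).ne
  refine ⟨omegaN N * Real.sqrt d / 2, by positivity, ?_⟩
  intro t ht
  have claim : ∀ m : ℕ, 1 ≤ m → (m : ℝ) * Real.sqrt d ≤ Real.sqrt ((Jmat Q B 0 (m:ℝ)).det) := by
    intro m hm
    induction m, hm using Nat.le_induction with
    | base => simp [hd_def]
    | succ n hn ih =>
      have hnpos : (0:ℝ) < n := by exact_mod_cast hn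
      have hsplit : Jmat Q B 0 (n:ℝ) + Jmat Q B (n:ℝ) ((n:ℝ)+1) = Jmat Q B 0 ((n:ℝ)+1) :=
        Jmat_add Q B 0 (n:ℝ) ((n:ℝ)+1)
      have hpieceDet : (Jmat Q B (n:ℝ) ((n:ℝ)+1)).det
          = Real.exp ((n:ℝ) * B.trace) * d * Real.exp ((n:ℝ) * B.trace) := by
        rw [Jmat_piece Q B (n:ℝ), Matrix.det_mul, Matrix.det_mul, Matrix.det_transpose,
          det_exp_eq]
      have hpiece_ge : Real.sqrt d ≤ Real.sqrt ((Jmat Q B (n:ℝ) ((n:ℝ)+1)).det) := by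
        apply Real.sqrt_le_sqrt
        rw [hpieceDet]
        have hexp1 : (1:ℝ) ≤ Real.exp ((n:ℝ) * B.trace) :=
          Real.one_le_exp (by positivity)
        nlinarith [mul_le_mul_of_nonneg_right hexp1 hd.le,
          mul_le_mul_of_nonneg_left hexp1 (mul_nonneg (Real.exp_nonneg ((n:ℝ) * B.trace)) hd.le)]
      have hkey := sqrt_det_add hN (Jmat_posDef Q B hHor hnpos)
        (Jmat_posSemidef Q B hQ (by linarith : (n:ℝ) ≤ (n:ℝ)+1))
      rw [hsplit] at hkey
      push_cast
      push_cast at ih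
      linarith
  set n : ℕ := ⌊t⌋₊ with hn_def
  have hn1 : 1 ≤ n := Nat.le_floor (by exact_mod_cast ht)
  have hnt : (n:ℝ) ≤ t := Nat.floor_le (by linarith)
  have htn : t < (n:ℝ) + 1 := Nat.lt_floor_add_one t
  have hn1' : (1:ℝ) ≤ (n:ℝ) := by exact_mod_cast hn1
  have hnpos : (0:ℝ) < (n:ℝ) := by linarith
  have h1 : Real.sqrt ((Jmat Q B 0 (n:ℝ)).det) ≤ Real.sqrt ((Jmat Q B 0 t).det) := by
    have hsplit : Jmat Q B 0 (n:ℝ) + Jmat Q B (n:ℝ) t = Jmat Q B 0 t := Jmat_add Q B 0 (n:ℝ) t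
    have hkey := sqrt_det_add hN (Jmat_posDef Q B hHor hnpos)
      (Jmat_posSemidef Q B hQ hnt)
    rw [hsplit] at hkey
    have := Real.sqrt_nonneg ((Jmat Q B (n:ℝ) t).det)
    linarith
  have h2 : (n:ℝ) * Real.sqrt d ≤ Real.sqrt ((Jmat Q B 0 t).det) :=
    le_trans (claim n hn1) h1
  have h4 : t / 2 * Real.sqrt d ≤ Real.sqrt ((Jmat Q B 0 t).det) := by
    have hsd : 0 ≤ Real.sqrt d := Real.sqrt_nonneg d
    nlinarith
  have htpos : (0:ℝ) < t := by linarith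
  unfold hV
  rw [← Jmat_eq_smul_hK Q B htpos.ne']
  calc omegaN N * Real.sqrt d / 2 * t = omegaN N * (t / 2 * Real.sqrt d) := by ring
  _ ≤ omegaN N * Real.sqrt ((Jmat Q B 0 t).det) := mul_le_mul_of_nonneg_left h4 hω.le
end
end

section
/- Assume additionally that tr B ≥ 0 and that L₀ := max{Re(λ) : λ a (complex) eigenvalue of B} > 0. Then there exists a constant c₀ > 0 such that V(t) ≥ c₀·e^{L₀ t} for all t ≥ 1. -/
open MeasureTheory Matrix Real
open scoped ENNReal Topology

noncomputable section

namespace VolGrowthAux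

variable {N : ℕ}

/-- the integrand matrix -/
def Mfun (Q B : Matrix (Fin N) (Fin N) ℝ) (s : ℝ) : Matrix (Fin N) (Fin N) ℝ :=
  NormedSpace.exp (s • B) * Q * NormedSpace.exp (s • Bᵀ)

/-- the un-normalized covariance -/
def Cmat (Q B : Matrix (Fin N) (Fin N) ℝ) (t : ℝ) : Matrix (Fin N) (Fin N) ℝ :=
  Matrix.of fun i j => ∫ s in (0:ℝ)..t, Mfun Q B s i j

lemma continuous_exp_smul (B : Matrix (Fin N) (Fin N) ℝ) :
    Continuous fun s : ℝ => NormedSpace.exp (s • B) := by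
  letI : SeminormedRing (Matrix (Fin N) (Fin N) ℝ) := Matrix.linftyOpSemiNormedRing
  letI : NormedRing (Matrix (Fin N) (Fin N) ℝ) := Matrix.linftyOpNormedRing
  letI : NormedAlgebra ℝ (Matrix (Fin N) (Fin N) ℝ) := Matrix.linftyOpNormedAlgebra
  letI : NormedAlgebra ℚ (Matrix (Fin N) (Fin N) ℝ) := .restrictScalars ℚ ℝ _
  exact NormedSpace.exp_continuous.comp (continuous_id.smul continuous_const)

lemma continuous_Mfun (Q B : Matrix (Fin N) (Fin N) ℝ) (i j : Fin N) :
    Continuous fun s : ℝ => Mfun Q B s i j := by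
  have h1 := continuous_exp_smul B
  have h2 := continuous_exp_smul Bᵀ
  have hm : Continuous fun s : ℝ => Mfun Q B s :=
    (h1.matrix_mul continuous_const).matrix_mul h2
  exact ((continuous_apply j).comp ((continuous_apply i).comp hm))

lemma eigen_exp (A : Matrix (Fin N) (Fin N) ℂ) (v : Fin N → ℂ) (μ : ℂ)
    (hv : A *ᵥ v = μ • v) :
    NormedSpace.exp A *ᵥ v = Complex.exp μ • v := by
  letI : SeminormedRing (Matrix (Fin N) (Fin N) ℂ) := Matrix.linftyOpSemiNormedRing
  letI : NormedRing (Matrix (Fin N) (Fin N) ℂ) := Matrix.linftyOpNormedRing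
  letI : NormedAlgebra ℝ (Matrix (Fin N) (Fin N) ℂ) := Matrix.linftyOpNormedAlgebra
  have hpow : ∀ n : ℕ, A ^ n *ᵥ v = μ ^ n • v := by
    intro n
    induction n with
    | zero => simp
    | succ n ih =>
      rw [pow_succ, ← Matrix.mulVec_mulVec, hv, Matrix.mulVec_smul, ih, smul_smul,
        pow_succ, mul_comm]
  let T0 : Matrix (Fin N) (Fin N) ℂ →ₗ[ℝ] (Fin N → ℂ) :=
    { toFun := fun M => M *ᵥ v
      map_add' := fun M M' => Matrix.add_mulVec M M' v
      map_smul' := fun r M => by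
        ext i
        simp [Matrix.mulVec, dotProduct, Finset.smul_sum, Matrix.smul_apply,
          smul_mul_assoc, mul_assoc] }
  let T : Matrix (Fin N) (Fin N) ℂ →L[ℝ] (Fin N → ℂ) := T0.toContinuousLinearMap
  let S0 : ℂ →ₗ[ℝ] (Fin N → ℂ) :=
    (LinearMap.toSpanSingleton ℂ (Fin N → ℂ) v).restrictScalars ℝ
  let S : ℂ →L[ℝ] (Fin N → ℂ) := S0.toContinuousLinearMap
  have hsum := NormedSpace.expSeries_summable' (𝕂 := ℝ) A
  have hsum2 := NormedSpace.expSeries_summable' (𝕂 := ℝ) μ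
  have step1 : NormedSpace.exp A *ᵥ v = T (∑' n : ℕ, ((n.factorial : ℝ)⁻¹) • A ^ n) := by
    rw [NormedSpace.exp_eq_tsum ℝ]
    rfl
  rw [step1, T.map_tsum hsum]
  have step2 : ∀ n : ℕ, T (((n.factorial : ℝ)⁻¹) • A ^ n) = (((n.factorial : ℝ)⁻¹) • μ ^ n) • v := by
    intro n
    have : T (((n.factorial : ℝ)⁻¹) • A ^ n) = ((n.factorial : ℝ)⁻¹) • (A ^ n *ᵥ v) := T.map_smul _ _
    rw [this, hpow n, smul_assoc]
  simp_rw [step2]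
  have step3 : ∑' n : ℕ, ((((n.factorial : ℝ)⁻¹) • μ ^ n) • v)
      = (∑' n : ℕ, ((n.factorial : ℝ)⁻¹) • μ ^ n) • v := (S.map_tsum hsum2).symm
  rw [step3]
  congr 1
  have h4 : NormedSpace.exp μ = ∑' n : ℕ, ((n.factorial : ℝ)⁻¹) • μ ^ n := by
    rw [NormedSpace.exp_eq_tsum ℝ]
  rw [← h4, Complex.exp_eq_exp_ℂ]

lemma exp_map_ofReal (A : Matrix (Fin N) (Fin N) ℝ) :
    (NormedSpace.exp A).map Complex.ofReal
      = NormedSpace.exp (A.map Complex.ofReal) := by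
  letI : SeminormedRing (Matrix (Fin N) (Fin N) ℝ) := Matrix.linftyOpSemiNormedRing
  letI : NormedRing (Matrix (Fin N) (Fin N) ℝ) := Matrix.linftyOpNormedRing
  letI : NormedAlgebra ℝ (Matrix (Fin N) (Fin N) ℝ) := Matrix.linftyOpNormedAlgebra
  letI : NormedAlgebra ℚ (Matrix (Fin N) (Fin N) ℝ) := .restrictScalars ℚ ℝ _
  letI : SeminormedRing (Matrix (Fin N) (Fin N) ℂ) := Matrix.linftyOpSemiNormedRing
  letI : NormedRing (Matrix (Fin N) (Fin N) ℂ) := Matrix.linftyOpNormedRing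
  letI : NormedAlgebra ℝ (Matrix (Fin N) (Fin N) ℂ) := Matrix.linftyOpNormedAlgebra
  have hf : Continuous (Complex.ofRealHom.mapMatrix :
      Matrix (Fin N) (Fin N) ℝ →+* Matrix (Fin N) (Fin N) ℂ) := by
    have : Continuous fun M : Matrix (Fin N) (Fin N) ℝ => M.map Complex.ofReal :=
      Continuous.matrix_map continuous_id Complex.continuous_ofReal
    exact this
  exact NormedSpace.map_exp Complex.ofRealHom.mapMatrix hf A


lemma dot_integral (f : ℝ → Matrix (Fin N) (Fin N) ℝ)
    (hf : ∀ i j, Continuous fun s => f s i j) (x : Fin N → ℝ) (t : ℝ) :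
    x ⬝ᵥ ((Matrix.of fun i j => ∫ s in (0:ℝ)..t, f s i j) *ᵥ x)
      = ∫ s in (0:ℝ)..t, x ⬝ᵥ (f s *ᵥ x) := by
  have hint : ∀ i j, IntervalIntegrable (fun s => x i * x j * f s i j) volume 0 t :=
    fun i j => (continuous_const.mul (hf i j)).intervalIntegrable _ _
  calc x ⬝ᵥ ((Matrix.of fun i j => ∫ s in (0:ℝ)..t, f s i j) *ᵥ x)
      = ∑ i, ∑ j, x i * x j * ∫ s in (0:ℝ)..t, f s i j := by
        simp only [dotProduct, Matrix.mulVec, Matrix.of_apply]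
        refine Finset.sum_congr rfl fun i _ => ?_
        rw [Finset.mul_sum]
        refine Finset.sum_congr rfl fun j _ => ?_
        ring
    _ = ∑ i, ∑ j, ∫ s in (0:ℝ)..t, x i * x j * f s i j := by
        refine Finset.sum_congr rfl fun i _ => Finset.sum_congr rfl fun j _ => ?_
        rw [intervalIntegral.integral_const_mul]
    _ = ∑ i, ∫ s in (0:ℝ)..t, ∑ j, x i * x j * f s i j := by
        refine Finset.sum_congr rfl fun i _ => ?_
        rw [intervalIntegral.integral_finset_sum fun j _ => hint i j]
    _ = ∫ s in (0:ℝ)..t, ∑ i, ∑ j, x i * x j * f s i j := by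
        have hint2 : ∀ i : Fin N, IntervalIntegrable (fun s => ∑ j, x i * x j * f s i j)
            volume 0 t := fun i =>
          (continuous_finset_sum Finset.univ fun j _ =>
            continuous_const.mul (hf i j)).intervalIntegrable _ _
        exact (intervalIntegral.integral_finset_sum
          (f := fun i s => ∑ j, x i * x j * f s i j) (fun i _ => hint2 i)).symm
    _ = ∫ s in (0:ℝ)..t, x ⬝ᵥ (f s *ᵥ x) := by
        refine intervalIntegral.integral_congr fun s _ => ?_
        simp only [dotProduct, Matrix.mulVec]
        refine Finset.sum_congr rfl fun i _ => ?_
        rw [Finset.mul_sum]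
        refine Finset.sum_congr rfl fun j _ => ?_
        ring

lemma trace_integral (f : ℝ → Matrix (Fin N) (Fin N) ℝ)
    (hf : ∀ i j, Continuous fun s => f s i j) (t : ℝ) :
    (Matrix.of fun i j => ∫ s in (0:ℝ)..t, f s i j).trace
      = ∫ s in (0:ℝ)..t, (f s).trace := by
  simp only [Matrix.trace, Matrix.diag, Matrix.of_apply]
  rw [intervalIntegral.integral_finset_sum fun i _ =>
    (hf i i).intervalIntegrable _ _]

lemma trace_WtW (W : Matrix (Fin N) (Fin N) ℝ) :
    (Wᵀ * W).trace = ∑ i, ∑ j, (W i j) ^ 2 := by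
  simp only [Matrix.trace, Matrix.diag, Matrix.mul_apply, Matrix.transpose_apply, sq]
  exact Finset.sum_comm

lemma form_WtW (W : Matrix (Fin N) (Fin N) ℝ) (x : Fin N → ℝ) :
    x ⬝ᵥ ((Wᵀ * W) *ᵥ x) = ∑ i, (∑ j, W i j * x j) ^ 2 := by
  rw [← Matrix.mulVec_mulVec, Matrix.dotProduct_mulVec, Matrix.vecMul_transpose]
  simp only [dotProduct, Matrix.mulVec, sq]

lemma form_WtW_nonneg (W : Matrix (Fin N) (Fin N) ℝ) (x : Fin N → ℝ) :
    0 ≤ x ⬝ᵥ ((Wᵀ * W) *ᵥ x) := by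
  rw [form_WtW]
  exact Finset.sum_nonneg fun i _ => sq_nonneg _

lemma form_le_trace (W : Matrix (Fin N) (Fin N) ℝ) (x : Fin N → ℝ) :
    x ⬝ᵥ ((Wᵀ * W) *ᵥ x) ≤ (Wᵀ * W).trace * ∑ k, x k ^ 2 := by
  rw [form_WtW, trace_WtW, Finset.sum_mul]
  refine Finset.sum_le_sum fun i _ => ?_
  exact Finset.sum_mul_sq_le_sq_mul_sq Finset.univ (fun j => W i j) x

lemma trace_WtW_nonneg (W : Matrix (Fin N) (Fin N) ℝ) : 0 ≤ (Wᵀ * W).trace := by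
  rw [trace_WtW]
  exact Finset.sum_nonneg fun i _ => Finset.sum_nonneg fun j _ => sq_nonneg _

lemma Mfun_eq_WtW (Q B : Matrix (Fin N) (Fin N) ℝ) (R0 : Matrix (Fin N) (Fin N) ℝ)
    (hQR : Q = R0ᵀ * R0) (s : ℝ) :
    Mfun Q B s = (R0 * NormedSpace.exp (s • Bᵀ))ᵀ * (R0 * NormedSpace.exp (s • Bᵀ)) := by
  have hexp : (NormedSpace.exp (s • Bᵀ))ᵀ = NormedSpace.exp (s • B) := by
    rw [← Matrix.exp_transpose, Matrix.transpose_smul, Matrix.transpose_transpose]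
  rw [Matrix.transpose_mul, hexp, Mfun, hQR]
  simp only [Matrix.mul_assoc]


lemma re_form (M : Matrix (Fin N) (Fin N) ℝ) (v : Fin N → ℂ) :
    (star v ⬝ᵥ ((M.map Complex.ofReal) *ᵥ v)).re
      = (fun i => (v i).re) ⬝ᵥ (M *ᵥ (fun i => (v i).re))
        + (fun i => (v i).im) ⬝ᵥ (M *ᵥ (fun i => (v i).im)) := by
  have key : ∀ a : Fin N → ℝ, a ⬝ᵥ (M *ᵥ a) = ∑ i, ∑ j, M i j * (a i * a j) := by
    intro a
    simp only [dotProduct, Matrix.mulVec]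
    refine Finset.sum_congr rfl fun i _ => ?_
    rw [Finset.mul_sum]
    refine Finset.sum_congr rfl fun j _ => ?_
    ring
  rw [key, key, ← Finset.sum_add_distrib]
  simp only [dotProduct, Matrix.mulVec, Matrix.map_apply, Pi.star_apply]
  rw [Complex.re_sum]
  refine Finset.sum_congr rfl fun i _ => ?_
  rw [Finset.mul_sum, Complex.re_sum, ← Finset.sum_add_distrib]
  refine Finset.sum_congr rfl fun j _ => ?_
  simp only [RCLike.star_def, Complex.mul_re, Complex.conj_re, Complex.conj_im,
    Complex.ofReal_re, Complex.ofReal_im, Complex.mul_im]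
  ring

lemma smul_map_ofReal (A : Matrix (Fin N) (Fin N) ℝ) (s : ℝ) :
    (s • A).map Complex.ofReal = s • (A.map Complex.ofReal) := by
  ext i j
  simp [Matrix.map_apply, Complex.real_smul]

lemma map_ofReal_mul (A C : Matrix (Fin N) (Fin N) ℝ) :
    (A * C).map Complex.ofReal = (A.map Complex.ofReal) * (C.map Complex.ofReal) := by
  ext i j
  simp [Matrix.map_apply, Matrix.mul_apply]

lemma smul_mulVec_real (s : ℝ) (A : Matrix (Fin N) (Fin N) ℂ) (v : Fin N → ℂ) :
    (s • A) *ᵥ v = s • (A *ᵥ v) := by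
  ext i
  simp [Matrix.mulVec, dotProduct, Matrix.smul_apply, Finset.smul_sum, smul_mul_assoc,
    mul_assoc]

lemma star_eigen (A : Matrix (Fin N) (Fin N) ℝ) (v : Fin N → ℂ) (μ : ℂ)
    (hv : (A.map Complex.ofReal) *ᵥ v = μ • v) :
    (A.map Complex.ofReal) *ᵥ (star v) = (starRingEnd ℂ μ) • (star v) := by
  ext i
  have h1 := congr_fun hv i
  simp only [Matrix.mulVec, dotProduct, Matrix.map_apply, Pi.smul_apply,
    Pi.star_apply, smul_eq_mul] at h1 ⊢
  calc ∑ j, (A i j : ℂ) * star (v j) = starRingEnd ℂ (∑ j, (A i j : ℂ) * v j) := by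
        rw [map_sum]
        refine Finset.sum_congr rfl fun j _ => ?_
        simp [Complex.conj_ofReal]
    _ = starRingEnd ℂ μ * star (v i) := by rw [h1, RingHom.map_mul]; rfl

lemma form_Mfun_eigen (Q B : Matrix (Fin N) (Fin N) ℝ) (v : Fin N → ℂ) (μ : ℂ)
    (hv : (Bᵀ.map Complex.ofReal) *ᵥ v = μ • v) (s : ℝ) :
    star v ⬝ᵥ (((Mfun Q B s).map Complex.ofReal) *ᵥ v)
      = (Real.exp (2 * μ.re * s) : ℂ) * (star v ⬝ᵥ ((Q.map Complex.ofReal) *ᵥ v)) := by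
  set B' := B.map Complex.ofReal with hB'
  set Q' := Q.map Complex.ofReal with hQ'
  have hBt : Bᵀ.map Complex.ofReal = B'ᵀ := by
    ext i j; simp [Matrix.map_apply, Matrix.transpose_apply, hB']
  have hmap : (Mfun Q B s).map Complex.ofReal
      = NormedSpace.exp (s • B') * Q' * NormedSpace.exp (s • B'ᵀ) := by
    rw [Mfun, map_ofReal_mul, map_ofReal_mul, exp_map_ofReal, exp_map_ofReal,
      smul_map_ofReal, smul_map_ofReal, hBt]
  have heigF : NormedSpace.exp (s • B'ᵀ) *ᵥ v = Complex.exp (s * μ) • v := by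
    apply eigen_exp
    rw [smul_mulVec_real, ← hBt, hv]
    ext i
    simp only [Pi.smul_apply, smul_eq_mul, Complex.real_smul]
    ring
  have heigFstar : NormedSpace.exp (s • B'ᵀ) *ᵥ (star v)
      = Complex.exp (↑s * starRingEnd ℂ μ) • (star v) := by
    apply eigen_exp
    have hst := star_eigen Bᵀ v μ hv
    rw [smul_mulVec_real, ← hBt, hst]
    ext i
    simp only [Pi.smul_apply, smul_eq_mul, Complex.real_smul]
    ring
  have hEt : (NormedSpace.exp (s • B'))ᵀ = NormedSpace.exp (s • B'ᵀ) := by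
    rw [← Matrix.exp_transpose, Matrix.transpose_smul]
  have hc : Complex.exp (↑s * starRingEnd ℂ μ) * Complex.exp (↑s * μ)
      = (Real.exp (2 * μ.re * s) : ℂ) := by
    rw [← Complex.exp_add, Complex.ofReal_exp]
    congr 1
    have h5 : (↑s * starRingEnd ℂ μ + ↑s * μ) = ↑s * (μ + starRingEnd ℂ μ) := by ring
    rw [h5, Complex.add_conj]
    push_cast
    ring
  rw [hmap, ← Matrix.mulVec_mulVec, ← Matrix.mulVec_mulVec, Matrix.dotProduct_mulVec,
    ← Matrix.mulVec_transpose, hEt, heigFstar, heigF, Matrix.mulVec_smul,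
    smul_dotProduct, dotProduct_smul, ← hc]
  simp only [smul_eq_mul]
  ring


lemma trace_eq_sum_eigenvalues (C : Matrix (Fin N) (Fin N) ℝ) (hC : C.IsHermitian) :
    C.trace = ∑ i, hC.eigenvalues i := by
  nth_rewrite 1 [hC.spectral_theorem]
  rw [Unitary.conjStarAlgAut_apply]
  rw [Matrix.trace_mul_cycle,
    Unitary.star_mul_self_of_mem (hC.eigenvectorUnitary).prop, Matrix.one_mul,
    Matrix.trace_diagonal]
  simp

lemma det_lower (C : Matrix (Fin N) (Fin N) ℝ) (hC : C.IsHermitian) (hN : 0 < N)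
    (m R : ℝ) (hm : 0 < m) (hR : 0 ≤ R)
    (hlow : ∀ i, m ≤ hC.eigenvalues i)
    (htr : R ≤ C.trace) :
    m ^ (N - 1) * (R / N) ≤ C.det := by
  have htr2 := trace_eq_sum_eigenvalues C hC
  have hNne : (N : ℝ) ≠ 0 := Nat.cast_ne_zero.mpr hN.ne'
  obtain ⟨i0, _, hi0⟩ : ∃ i ∈ Finset.univ, C.trace / N ≤ hC.eigenvalues i := by
    have : Nonempty (Fin N) := ⟨⟨0, hN⟩⟩
    apply Finset.exists_le_of_sum_le
    · exact Finset.univ_nonempty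
    · rw [Finset.sum_const, Finset.card_univ, Fintype.card_fin, nsmul_eq_mul, ← htr2]
      field_simp
      exact le_rfl
  have hdet : C.det = hC.eigenvalues i0 * ∏ i ∈ Finset.univ.erase i0, hC.eigenvalues i := by
    have h6 := hC.det_eq_prod_eigenvalues
    simp only [RCLike.ofReal_real_eq_id, id] at h6
    rw [h6, ← Finset.mul_prod_erase Finset.univ _ (Finset.mem_univ i0)]
  have hprod : m ^ (N - 1) ≤ ∏ i ∈ Finset.univ.erase i0, hC.eigenvalues i := by
    have h1 : ∏ i ∈ Finset.univ.erase i0, m ≤ ∏ i ∈ Finset.univ.erase i0, hC.eigenvalues i :=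
      Finset.prod_le_prod (fun i _ => hm.le) (fun i _ => hlow i)
    rwa [Finset.prod_const, Finset.card_erase_of_mem (Finset.mem_univ i0),
      Finset.card_univ, Fintype.card_fin] at h1
  have hNpos : (0:ℝ) < N := Nat.cast_pos.mpr hN
  have hRN : R / N ≤ hC.eigenvalues i0 := le_trans (by gcongr) hi0
  rw [hdet, mul_comm (hC.eigenvalues i0)]
  exact mul_le_mul hprod hRN (by positivity) (le_trans (by positivity) hprod)

end VolGrowthAux


open VolGrowthAux in
/-- if some eigenvalue of `B` has strictly positive real part, `V(t)` blows up
exponentially. -/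
theorem volume_exponential_growth
    (N : ℕ) (hN : 2 ≤ N) (Q B : Matrix (Fin N) (Fin N) ℝ)
    (hQ : Q.PosSemidef)
    (hHor : ∀ t > 0, (hK Q B t).PosDef)
    (htr : 0 ≤ B.trace)
    (L0 : ℝ) (hL0 : 0 < L0)
    (hmem : ∃ μ ∈ spectrum ℂ (B.map Complex.ofReal), μ.re = L0)
    (hmax : ∀ μ ∈ spectrum ℂ (B.map Complex.ofReal), μ.re ≤ L0) :
    ∃ c₀ > (0:ℝ), ∀ t ≥ (1:ℝ), c₀ * Real.exp (L0 * t) ≤ hV Q B t := by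
  classical
  obtain ⟨μ, hμ, hμre⟩ := hmem
  -- eigenvector of Bᵀ (complexified)
  have hdet0 : (μ • (1 : Matrix (Fin N) (Fin N) ℂ) - Bᵀ.map Complex.ofReal).det = 0 := by
    have h1 : ¬ IsUnit (algebraMap ℂ (Matrix (Fin N) (Fin N) ℂ) μ - B.map Complex.ofReal) :=
      spectrum.mem_iff.mp hμ
    have h2 : algebraMap ℂ (Matrix (Fin N) (Fin N) ℂ) μ - B.map Complex.ofReal
        = μ • (1 : Matrix (Fin N) (Fin N) ℂ) - B.map Complex.ofReal := by
      rw [Algebra.algebraMap_eq_smul_one]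
    have h3 : (μ • (1 : Matrix (Fin N) (Fin N) ℂ) - B.map Complex.ofReal).det = 0 := by
      by_contra h
      exact h1 (h2 ▸ (Matrix.isUnit_iff_isUnit_det _).mpr (isUnit_iff_ne_zero.mpr h))
    have h4 : (μ • (1 : Matrix (Fin N) (Fin N) ℂ) - Bᵀ.map Complex.ofReal)
        = (μ • (1 : Matrix (Fin N) (Fin N) ℂ) - B.map Complex.ofReal)ᵀ := by
      rw [Matrix.transpose_sub, Matrix.transpose_smul, Matrix.transpose_one]
      congr 1
    rw [h4, Matrix.det_transpose]
    exact h3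
  obtain ⟨v, hvne, hveq⟩ := (Matrix.exists_mulVec_eq_zero_iff).mpr hdet0
  have heig : (Bᵀ.map Complex.ofReal) *ᵥ v = μ • v := by
    rw [Matrix.sub_mulVec, sub_eq_zero] at hveq
    rw [← hveq, Matrix.smul_mulVec, Matrix.one_mulVec]
  -- decomposition of Q
  obtain ⟨R0, hQR0⟩ : ∃ R0 : Matrix (Fin N) (Fin N) ℝ, Q = star R0 * R0 := by
    open scoped MatrixOrder in
    exact CStarAlgebra.nonneg_iff_eq_star_mul_self.mp (Matrix.nonneg_iff_posSemidef.mpr hQ)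
  have hQR : Q = R0ᵀ * R0 := by
    rw [hQR0]
    congr 1
  have hMW : ∀ s : ℝ, Mfun Q B s
      = (R0 * NormedSpace.exp (s • Bᵀ))ᵀ * (R0 * NormedSpace.exp (s • Bᵀ)) :=
    Mfun_eq_WtW Q B R0 hQR
  have hcont : ∀ i j, Continuous fun s => Mfun Q B s i j := continuous_Mfun Q B
  -- hK and Cmat
  have hKC : ∀ t : ℝ, t ≠ 0 → t • hK Q B t = Cmat Q B t := by
    intro t ht
    ext i j
    simp only [Matrix.smul_apply, hK, Cmat, Matrix.of_apply, smul_eq_mul, Mfun]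
    field_simp
  have hK1 : hK Q B 1 = Cmat Q B 1 := by
    have h := hKC 1 one_ne_zero
    rwa [one_smul] at h
  have hC1pos : (Cmat Q B 1).PosDef := hK1 ▸ hHor 1 one_pos
  -- quadratic forms
  have hform : ∀ (t : ℝ) (x : Fin N → ℝ),
      x ⬝ᵥ (Cmat Q B t *ᵥ x) = ∫ s in (0:ℝ)..t, x ⬝ᵥ (Mfun Q B s *ᵥ x) :=
    fun t x => dot_integral _ hcont x t
  have hformnn : ∀ (s : ℝ) (x : Fin N → ℝ), 0 ≤ x ⬝ᵥ (Mfun Q B s *ᵥ x) := by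
    intro s x
    rw [hMW s]
    exact form_WtW_nonneg _ x
  have hformcont : ∀ x : Fin N → ℝ, Continuous fun s => x ⬝ᵥ (Mfun Q B s *ᵥ x) := by
    intro x
    have h : ∀ s, x ⬝ᵥ (Mfun Q B s *ᵥ x) = ∑ i, x i * ∑ j, Mfun Q B s i j * x j :=
      fun s => rfl
    simp only [h]
    exact continuous_finset_sum _ fun i _ => continuous_const.mul
      (continuous_finset_sum _ fun j _ => (hcont i j).mul continuous_const)
  have hmono : ∀ t : ℝ, 1 ≤ t → ∀ x : Fin N → ℝ,
      x ⬝ᵥ (Cmat Q B 1 *ᵥ x) ≤ x ⬝ᵥ (Cmat Q B t *ᵥ x) := by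
    intro t ht x
    rw [hform, hform]
    have hi1 : IntervalIntegrable (fun s => x ⬝ᵥ (Mfun Q B s *ᵥ x)) volume 0 1 :=
      (hformcont x).intervalIntegrable _ _
    have hi2 : IntervalIntegrable (fun s => x ⬝ᵥ (Mfun Q B s *ᵥ x)) volume 1 t :=
      (hformcont x).intervalIntegrable _ _
    have hnn : 0 ≤ ∫ s in (1:ℝ)..t, x ⬝ᵥ (Mfun Q B s *ᵥ x) :=
      intervalIntegral.integral_nonneg ht (fun s _ => hformnn s x)
    have hsplit := intervalIntegral.integral_add_adjacent_intervals hi1 hi2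
    linarith [hsplit]
  -- minimum of the form of C(1) on the unit sphere
  haveI : Nonempty (Fin N) := ⟨⟨0, by omega⟩⟩
  have fcont : Continuous fun u : EuclideanSpace ℝ (Fin N) =>
      (u : Fin N → ℝ) ⬝ᵥ (Cmat Q B 1 *ᵥ (u : Fin N → ℝ)) := by
    have h : ∀ u : EuclideanSpace ℝ (Fin N),
        (u : Fin N → ℝ) ⬝ᵥ (Cmat Q B 1 *ᵥ (u : Fin N → ℝ))
          = ∑ i, ∑ j, Cmat Q B 1 i j * (u i * u j) := by
      intro u
      simp only [dotProduct, Matrix.mulVec]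
      refine Finset.sum_congr rfl fun i _ => ?_
      rw [Finset.mul_sum]
      refine Finset.sum_congr rfl fun j _ => ?_
      ring
    simp only [h]
    refine continuous_finset_sum _ fun i _ => continuous_finset_sum _ fun j _ => ?_
    have hpi : ∀ k : Fin N, Continuous fun u : EuclideanSpace ℝ (Fin N) => u k :=
      fun k => (EuclideanSpace.proj k : EuclideanSpace ℝ (Fin N) →L[ℝ] ℝ).continuous
    exact continuous_const.mul ((hpi i).mul (hpi j))
  obtain ⟨u₀, hu₀mem, hmin'⟩ := (isCompact_sphere (0 : EuclideanSpace ℝ (Fin N)) 1).exists_isMinOn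
    (NormedSpace.sphere_nonempty.mpr zero_le_one) fcont.continuousOn
  have hmin : ∀ u ∈ Metric.sphere (0 : EuclideanSpace ℝ (Fin N)) 1,
      (u₀ : Fin N → ℝ) ⬝ᵥ (Cmat Q B 1 *ᵥ (u₀ : Fin N → ℝ))
        ≤ (u : Fin N → ℝ) ⬝ᵥ (Cmat Q B 1 *ᵥ (u : Fin N → ℝ)) := fun u hu => hmin' hu
  set m : ℝ := (u₀ : Fin N → ℝ) ⬝ᵥ (Cmat Q B 1 *ᵥ (u₀ : Fin N → ℝ)) with hmdef
  have hu₀norm : ‖u₀‖ = 1 := by rwa [mem_sphere_zero_iff_norm] at hu₀mem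
  have hu₀ne : (u₀ : Fin N → ℝ) ≠ 0 := by
    intro h0
    have h1 : u₀ = 0 := PiLp.ext fun i => congr_fun h0 i
    rw [h1] at hu₀norm
    simp at hu₀norm
  have hmpos : 0 < m := by
    have h := hC1pos.dotProduct_mulVec_pos (x := (u₀ : Fin N → ℝ)) hu₀ne
    simpa using h
  -- Hermitian and eigenvalue lower bound
  have hherm : ∀ t : ℝ, (Cmat Q B t).IsHermitian := by
    intro t
    show (Cmat Q B t)ᴴ = Cmat Q B t
    ext i j
    simp only [Matrix.conjTranspose_apply, Cmat, Matrix.of_apply, star_trivial]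
    refine intervalIntegral.integral_congr fun s _ => ?_
    rw [hMW s]
    simp only [Matrix.mul_apply, Matrix.transpose_apply]
    exact Finset.sum_congr rfl fun k _ => mul_comm _ _
  have heiglow : ∀ t : ℝ, 1 ≤ t → ∀ i, m ≤ (hherm t).eigenvalues i := by
    intro t ht i
    rw [Matrix.IsHermitian.eigenvalues_eq]
    set u := (hherm t).eigenvectorBasis i with hu
    have hnorm : ‖u‖ = 1 := (hherm t).eigenvectorBasis.orthonormal.1 i
    have h1 : m ≤ (u : Fin N → ℝ) ⬝ᵥ (Cmat Q B 1 *ᵥ (u : Fin N → ℝ)) :=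
      hmin u (by rwa [mem_sphere_zero_iff_norm])
    have h2 := hmono t ht (u : Fin N → ℝ)
    have h3 := le_trans h1 h2
    simpa using h3
  -- positivity of q
  have hsplitform : ∀ (M : Matrix (Fin N) (Fin N) ℝ),
      (star v ⬝ᵥ ((M.map Complex.ofReal) *ᵥ v)).re
        = (fun i => (v i).re) ⬝ᵥ (M *ᵥ (fun i => (v i).re))
          + (fun i => (v i).im) ⬝ᵥ (M *ᵥ (fun i => (v i).im)) := fun M => re_form M v
  set q : ℝ := (star v ⬝ᵥ ((Q.map Complex.ofReal) *ᵥ v)).re with hqdef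
  have hres : ∀ s : ℝ,
      (star v ⬝ᵥ (((Mfun Q B s).map Complex.ofReal) *ᵥ v)).re = Real.exp (2 * L0 * s) * q := by
    intro s
    rw [form_Mfun_eigen Q B v μ heig s, hμre, Complex.re_ofReal_mul]
  have hab : (fun i => (v i).re) ≠ (0 : Fin N → ℝ) ∨ (fun i => (v i).im) ≠ (0 : Fin N → ℝ) := by
    by_contra hcon
    push_neg at hcon
    apply hvne
    funext i
    have h1 : (v i).re = 0 := congr_fun hcon.1 i
    have h2 : (v i).im = 0 := congr_fun hcon.2 i
    have : v i = 0 := Complex.ext h1 h2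
    simpa using this
  have hqnn : 0 ≤ q := by
    rw [hqdef, hsplitform]
    have h1 := hQ.dotProduct_mulVec_nonneg (fun i => (v i).re)
    have h2 := hQ.dotProduct_mulVec_nonneg (fun i => (v i).im)
    simp only [star_trivial] at h1 h2
    linarith
  have hq0 : 0 < q := by
    rcases lt_or_eq_of_le hqnn with h | h
    · exact h
    exfalso
    have hZ : ∀ s : ℝ, (fun i => (v i).re) ⬝ᵥ (Mfun Q B s *ᵥ (fun i => (v i).re)) = 0
        ∧ (fun i => (v i).im) ⬝ᵥ (Mfun Q B s *ᵥ (fun i => (v i).im)) = 0 := by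
      intro s
      have h1 := hres s
      rw [← h, mul_zero] at h1
      rw [hsplitform] at h1
      have h2 := hformnn s (fun i => (v i).re)
      have h3 := hformnn s (fun i => (v i).im)
      constructor <;> linarith
    rcases hab with hne | hne
    · have hpos := hC1pos.dotProduct_mulVec_pos hne
      simp only [star_trivial] at hpos
      have hz : (fun i => (v i).re) ⬝ᵥ (Cmat Q B 1 *ᵥ (fun i => (v i).re)) = 0 := by
        rw [hform]
        have hcg : ∀ s ∈ Set.uIcc (0:ℝ) 1,
            (fun i => (v i).re) ⬝ᵥ (Mfun Q B s *ᵥ (fun i => (v i).re)) = 0 :=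
          fun s _ => (hZ s).1
        rw [intervalIntegral.integral_congr hcg]
        simp
      rw [hz] at hpos
      exact lt_irrefl _ hpos
    · have hpos := hC1pos.dotProduct_mulVec_pos hne
      simp only [star_trivial] at hpos
      have hz : (fun i => (v i).im) ⬝ᵥ (Cmat Q B 1 *ᵥ (fun i => (v i).im)) = 0 := by
        rw [hform]
        have hcg : ∀ s ∈ Set.uIcc (0:ℝ) 1,
            (fun i => (v i).im) ⬝ᵥ (Mfun Q B s *ᵥ (fun i => (v i).im)) = 0 :=
          fun s _ => (hZ s).2
        rw [intervalIntegral.integral_congr hcg]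
        simp
      rw [hz] at hpos
      exact lt_irrefl _ hpos
  -- the norm of v
  set nv : ℝ := (∑ k, (v k).re ^ 2) + (∑ k, (v k).im ^ 2) with hnvdef
  have hnv : 0 < nv := by
    have h1 : 0 ≤ ∑ k, (v k).re ^ 2 := Finset.sum_nonneg fun k _ => sq_nonneg _
    have h2 : 0 ≤ ∑ k, (v k).im ^ 2 := Finset.sum_nonneg fun k _ => sq_nonneg _
    rcases hab with hne | hne
    · obtain ⟨k, hk⟩ := Function.ne_iff.mp hne
      have : 0 < ∑ k, (v k).re ^ 2 :=
        Finset.sum_pos' (fun i _ => sq_nonneg _)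
          ⟨k, Finset.mem_univ k, sq_pos_of_ne_zero hk⟩
      linarith
    · obtain ⟨k, hk⟩ := Function.ne_iff.mp hne
      have : 0 < ∑ k, (v k).im ^ 2 :=
        Finset.sum_pos' (fun i _ => sq_nonneg _)
          ⟨k, Finset.mem_univ k, sq_pos_of_ne_zero hk⟩
      linarith
  -- pointwise trace lower bound
  have htrMlow : ∀ s : ℝ, Real.exp (2 * L0 * s) * q ≤ (Mfun Q B s).trace * nv := by
    intro s
    rw [← hres s, hsplitform]
    have h1 : (fun i => (v i).re) ⬝ᵥ (Mfun Q B s *ᵥ (fun i => (v i).re))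
        ≤ (Mfun Q B s).trace * ∑ k, (v k).re ^ 2 := by
      rw [hMW s]
      exact form_le_trace _ _
    have h2 : (fun i => (v i).im) ⬝ᵥ (Mfun Q B s *ᵥ (fun i => (v i).im))
        ≤ (Mfun Q B s).trace * ∑ k, (v k).im ^ 2 := by
      rw [hMW s]
      exact form_le_trace _ _
    rw [hnvdef]
    nlinarith
  have htrMnn : ∀ s : ℝ, 0 ≤ (Mfun Q B s).trace := by
    intro s
    rw [hMW s]
    exact trace_WtW_nonneg _
  have htrcont : Continuous fun s => (Mfun Q B s).trace :=
    continuous_finset_sum _ fun i _ => hcont i i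
  have htraceC : ∀ t : ℝ, (Cmat Q B t).trace = ∫ s in (0:ℝ)..t, (Mfun Q B s).trace :=
    fun t => trace_integral _ hcont t
  -- trace integral lower bound for t ≥ 1
  have hTlow : ∀ t : ℝ, 1 ≤ t →
      Real.exp (2 * L0 * (t - 1)) * (q / nv) ≤ (Cmat Q B t).trace := by
    intro t ht
    rw [htraceC]
    have hi1 : IntervalIntegrable (fun s => (Mfun Q B s).trace) volume 0 (t - 1) :=
      htrcont.intervalIntegrable _ _
    have hi2 : IntervalIntegrable (fun s => (Mfun Q B s).trace) volume (t - 1) t :=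
      htrcont.intervalIntegrable _ _
    have hadd := intervalIntegral.integral_add_adjacent_intervals hi1 hi2
    have hpos1 : 0 ≤ ∫ s in (0:ℝ)..(t - 1), (Mfun Q B s).trace :=
      intervalIntegral.integral_nonneg (by linarith) (fun s _ => htrMnn s)
    have hpos2 : Real.exp (2 * L0 * (t - 1)) * (q / nv)
        ≤ ∫ s in (t - 1)..t, (Mfun Q B s).trace := by
      have hconst : Real.exp (2 * L0 * (t - 1)) * (q / nv)
          = ∫ _ in (t - 1)..t, Real.exp (2 * L0 * (t - 1)) * (q / nv) := by
        rw [intervalIntegral.integral_const]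
        have : t - (t - 1) = 1 := by ring
        rw [this, one_smul]
      rw [hconst]
      apply intervalIntegral.integral_mono_on (by linarith) (intervalIntegrable_const) hi2
      intro s hs
      have h1 : Real.exp (2 * L0 * (t - 1)) ≤ Real.exp (2 * L0 * s) :=
        Real.exp_le_exp.mpr (by nlinarith [hs.1])
      have h2 : Real.exp (2 * L0 * (t - 1)) * (q / nv) ≤ Real.exp (2 * L0 * s) * (q / nv) :=
        mul_le_mul_of_nonneg_right h1 (by positivity)
      refine le_trans h2 ?_
      rw [← mul_div_assoc, div_le_iff₀ hnv]
      exact htrMlow s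
    linarith
  -- determinant lower bound
  have hdetlow : ∀ t : ℝ, 1 ≤ t →
      m ^ (N - 1) * ((Real.exp (2 * L0 * (t - 1)) * (q / nv)) / N) ≤ (Cmat Q B t).det := by
    intro t ht
    exact det_lower _ (hherm t) (by omega) m _ hmpos (by positivity) (heiglow t ht) (hTlow t ht)
  -- final constant
  set c : ℝ := m ^ (N - 1) * Real.exp (-(2 * L0)) * (q / nv) / N with hcdef
  have hc : 0 < c := by
    apply div_pos
    · exact mul_pos (mul_pos (pow_pos hmpos _) (Real.exp_pos _)) (div_pos hq0 hnv)
    · exact_mod_cast (by omega : 0 < N)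
  have hkey : ∀ t : ℝ, 1 ≤ t → c * Real.exp (L0 * t) ^ 2 ≤ (Cmat Q B t).det := by
    intro t ht
    have h := hdetlow t ht
    have heq : m ^ (N - 1) * ((Real.exp (2 * L0 * (t - 1)) * (q / nv)) / N)
        = c * Real.exp (L0 * t) ^ 2 := by
      have hexp : Real.exp (2 * L0 * (t - 1)) = Real.exp (L0 * t) ^ 2 * Real.exp (-(2 * L0)) := by
        rw [sq, ← Real.exp_add, ← Real.exp_add]
        congr 1
        ring
      rw [hcdef, hexp]
      ring
    linarith [heq ▸ h]
  have hω : 0 < omegaN N := by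
    rw [omegaN]
    have h1 : 0 < volume (Metric.ball (0 : EuclideanSpace ℝ (Fin N)) 1) :=
      Metric.measure_ball_pos _ _ one_pos
    have h2 : volume (Metric.ball (0 : EuclideanSpace ℝ (Fin N)) 1) < ⊤ :=
      measure_ball_lt_top
    exact ENNReal.toReal_pos h1.ne' h2.ne
  refine ⟨omegaN N * Real.sqrt c, by positivity, fun t ht => ?_⟩
  have ht0 : t ≠ 0 := by linarith
  have hVt : hV Q B t = omegaN N * Real.sqrt ((Cmat Q B t).det) := by
    rw [hV, hKC t ht0]
  have h1 : Real.sqrt c * Real.exp (L0 * t) ≤ Real.sqrt ((Cmat Q B t).det) := by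
    have h2 := Real.sqrt_le_sqrt (hkey t ht)
    rwa [Real.sqrt_mul hc.le, Real.sqrt_sq (Real.exp_nonneg _)] at h2
  calc omegaN N * Real.sqrt c * Real.exp (L0 * t)
      = omegaN N * (Real.sqrt c * Real.exp (L0 * t)) := by ring
    _ ≤ omegaN N * Real.sqrt ((Cmat Q B t).det) :=
        mul_le_mul_of_nonneg_left h1 hω.le
    _ = hV Q B t := hVt.symm
end
end

section
/- Let 1 ≤ p < ∞. There exists a constant c_{N,p} > 0, depending only on N and p, such that for every f ∈ L^p(ℝᴺ), every X ∈ ℝᴺ, and every t > 0 one has |P_t f(X)| ≤ c_{N,p}·V(t)^{−1/p}·‖f‖_{L^p} (ultracontractivity of the Hörmander semigroup). No sign assumption on tr B is needed. -/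
open MeasureTheory Matrix Real
open scoped ENNReal Topology

noncomputable section

section sqrtHelper
open scoped MatrixOrder
variable {n : Type*} [Fintype n] [DecidableEq n] {A : Matrix n n ℝ}

def Matrix.PosSemidef.sqrt (_hA : A.PosSemidef) : Matrix n n ℝ := CFC.sqrt A

lemma Matrix.PosSemidef.sqrt_mul_self (hA : A.PosSemidef) : hA.sqrt * hA.sqrt = A :=
  CFC.sqrt_mul_sqrt_self A hA.nonneg

lemma Matrix.PosSemidef.posSemidef_sqrt (hA : A.PosSemidef) : hA.sqrt.PosSemidef :=
  (CFC.sqrt_nonneg A).posSemidef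
end sqrtHelper

lemma quad_sq {N : ℕ} {M : Matrix (Fin N) (Fin N) ℝ} (hM : M.PosSemidef) (u : Fin N → ℝ) :
    M.mulVec u ⬝ᵥ u = (hM.sqrt.mulVec u) ⬝ᵥ (hM.sqrt.mulVec u) := by
  have h := hM.posSemidef_sqrt.1
  rw [Matrix.IsHermitian, conjTranspose_eq_transpose_of_trivial] at h
  conv_lhs => rw [← hM.sqrt_mul_self]
  rw [← Matrix.mulVec_mulVec, dotProduct_comm, dotProduct_mulVec,
    ← Matrix.mulVec_transpose, h]

lemma gauss_eq_prod {N : ℕ} (c : ℝ) : (fun v : Fin N → ℝ => Real.exp (-(c * (v ⬝ᵥ v))))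
      = fun v => ∏ i, Real.exp (-c * (v i) ^ 2) := by
  funext v
  rw [← Real.exp_sum]
  congr 1
  simp only [dotProduct, Finset.mul_sum]
  rw [← Finset.sum_neg_distrib]
  congr 1; funext i; ring

lemma gauss_prod_integrable {N : ℕ} {c : ℝ} (hc : 0 < c) :
    Integrable (fun v : Fin N → ℝ => Real.exp (-(c * (v ⬝ᵥ v)))) := by
  rw [gauss_eq_prod]
  exact Integrable.fintype_prod fun i => integrable_exp_neg_mul_sq hc

lemma gauss_prod_integral {N : ℕ} {c : ℝ} (hc : 0 < c) :
    ∫ v : Fin N → ℝ, Real.exp (-(c * (v ⬝ᵥ v))) = (π / c) ^ ((N : ℝ) / 2) := by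
  rw [gauss_eq_prod, volume_pi, integral_fintype_prod_eq_pow (fun x : ℝ => Real.exp (-c * x ^ 2)),
    integral_gaussian]
  rw [Real.sqrt_eq_rpow, Fintype.card_fin, ← Real.rpow_natCast ((π/c) ^ ((1:ℝ)/2)) N,
    ← Real.rpow_mul (by positivity)]
  congr 1
  ring

section gaussM
variable {N : ℕ} {M : Matrix (Fin N) (Fin N) ℝ}

lemma sqrt_det_abs (hM : M.PosDef) : Real.sqrt M.det = |(hM.posSemidef.sqrt).det| := by
  conv_lhs => rw [← hM.posSemidef.sqrt_mul_self]
  rw [Matrix.det_mul, ← sq, Real.sqrt_sq_eq_abs]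

lemma sqrt_det_ne_zero (hM : M.PosDef) : (hM.posSemidef.sqrt).det ≠ 0 := by
  intro h
  have h2 : M.det = 0 := by
    conv_lhs => rw [← hM.posSemidef.sqrt_mul_self]
    rw [Matrix.det_mul, h, mul_zero]
  exact hM.det_pos.ne' h2

lemma gauss_quad_integrable (hM : M.PosDef) {c : ℝ} (hc : 0 < c) :
    Integrable (fun u : Fin N → ℝ => Real.exp (-(c * (M.mulVec u ⬝ᵥ u)))) := by
  set S := hM.posSemidef.sqrt with hS
  have hmeas : Measurable (Matrix.toLin' S) :=
    (LinearMap.continuous_on_pi _).measurable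
  have hmap : Measure.map (Matrix.toLin' S) volume
      = ENNReal.ofReal |S.det⁻¹| • volume :=
    Real.map_matrix_volume_pi_eq_smul_volume_pi (sqrt_det_ne_zero hM)
  have hg : Integrable (fun v : Fin N → ℝ => Real.exp (-(c * (v ⬝ᵥ v))))
      (Measure.map (Matrix.toLin' S) volume) := by
    rw [hmap]
    exact (gauss_prod_integrable hc).smul_measure ENNReal.ofReal_ne_top
  have := (integrable_map_measure hg.aestronglyMeasurable hmeas.aemeasurable).mp hg
  refine this.congr ?_
  filter_upwards with u
  simp only [Function.comp, Matrix.toLin'_apply]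
  rw [quad_sq hM.posSemidef]

lemma gauss_quad_integral (hM : M.PosDef) {c : ℝ} (hc : 0 < c) :
    ∫ u : Fin N → ℝ, Real.exp (-(c * (M.mulVec u ⬝ᵥ u)))
      = (π / c) ^ ((N : ℝ) / 2) / Real.sqrt M.det := by
  set S := hM.posSemidef.sqrt with hS
  have hmeas : Measurable (Matrix.toLin' S) :=
    (LinearMap.continuous_on_pi _).measurable
  have hmap : Measure.map (Matrix.toLin' S) volume
      = ENNReal.ofReal |S.det⁻¹| • volume :=
    Real.map_matrix_volume_pi_eq_smul_volume_pi (sqrt_det_ne_zero hM)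
  have key : ∫ u : Fin N → ℝ, Real.exp (-(c * (M.mulVec u ⬝ᵥ u)))
      = ∫ v, Real.exp (-(c * (v ⬝ᵥ v))) ∂(Measure.map (Matrix.toLin' S) volume) := by
    rw [integral_map hmeas.aemeasurable]
    · congr 1; funext u
      rw [Matrix.toLin'_apply, quad_sq hM.posSemidef]
    · refine Continuous.aestronglyMeasurable ?_
      have hdp : Continuous fun v : Fin N → ℝ => v ⬝ᵥ v := by
        simp only [dotProduct]
        exact continuous_finset_sum _ fun i _ => (continuous_apply i).mul (continuous_apply i)
      exact Real.continuous_exp.comp ((continuous_const.mul hdp).neg)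
  rw [key, hmap, integral_smul_measure, gauss_prod_integral hc,
    abs_inv, ENNReal.toReal_ofReal (by positivity), sqrt_det_abs hM, smul_eq_mul, inv_mul_eq_div]
end gaussM


section main
variable {N : ℕ} (Q B : Matrix (Fin N) (Fin N) ℝ)

lemma omegaN_pos (N : ℕ) : 0 < omegaN N := by
  rw [omegaN]
  refine ENNReal.toReal_pos (Metric.measure_ball_pos volume 0 one_pos).ne' measure_ball_lt_top.ne

lemma hV_pos {t : ℝ} (ht : 0 < t) (hHor : (hK Q B t).PosDef) : 0 < hV Q B t := by
  rw [hV]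
  have h1 : 0 < ((t • hK Q B t).det) := by
    rw [Matrix.det_smul, Fintype.card_fin]
    exact mul_pos (pow_pos ht N) hHor.det_pos
  exact mul_pos (omegaN_pos N) (Real.sqrt_pos.mpr h1)

lemma hm_sq {t : ℝ} (hHor : (hK Q B t).PosDef) (X Y : Fin N → ℝ) :
    (hm Q B t X Y) ^ 2 =
      ((hK Q B t)⁻¹.mulVec (Y - (NormedSpace.exp (t • B)).mulVec X)) ⬝ᵥ
        (Y - (NormedSpace.exp (t • B)).mulVec X) := by
  rw [hm, Real.sq_sqrt]
  rw [dotProduct_comm]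
  have := hHor.inv.posSemidef.dotProduct_mulVec_nonneg (Y - (NormedSpace.exp (t • B)).mulVec X)
  simpa using this


lemma quadform_continuous (A : Matrix (Fin N) (Fin N) ℝ) (b : Fin N → ℝ) :
    Continuous fun Y : Fin N → ℝ => (A.mulVec (Y - b)) ⬝ᵥ (Y - b) := by
  simp only [dotProduct, Matrix.mulVec, Pi.sub_apply]
  refine continuous_finset_sum _ fun i _ => Continuous.mul ?_ ?_
  · exact continuous_finset_sum _ fun j _ =>
      continuous_const.mul ((continuous_apply j).sub continuous_const)
  · exact (continuous_apply i).sub continuous_const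

lemma hkernel_continuous (X : Fin N → ℝ) (t : ℝ) :
    Continuous fun Y => hkernel Q B X Y t := by
  simp only [hkernel, hm]
  refine Continuous.mul continuous_const ?_
  refine Real.continuous_exp.comp ?_
  refine Continuous.div_const (Continuous.neg ?_) _
  exact ((Real.continuous_sqrt.comp (quadform_continuous _ _)).pow 2)

lemma hkernel_nonneg (X Y : Fin N → ℝ) (t : ℝ) : 0 ≤ hkernel Q B X Y t := by
  rw [hkernel]
  refine mul_nonneg (div_nonneg (mul_nonneg (Real.rpow_nonneg (by positivity) _)
    (omegaN_pos N).le) ?_) (Real.exp_pos _).le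
  exact mul_nonneg (omegaN_pos N).le (Real.sqrt_nonneg _)

lemma hkernel_eq {t : ℝ} (hHor : (hK Q B t).PosDef) (ht : 0 < t) (X Y : Fin N → ℝ) :
    hkernel Q B X Y t = ((4 * π) ^ (-(N : ℝ) / 2) * omegaN N / hV Q B t) *
      Real.exp (-((1 / (4 * t)) *
        ((hK Q B t)⁻¹.mulVec (Y - (NormedSpace.exp (t • B)).mulVec X) ⬝ᵥ
          (Y - (NormedSpace.exp (t • B)).mulVec X)))) := by
  rw [hkernel]
  congr 1
  rw [hm_sq Q B hHor]
  ring_nf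

lemma hkernel_rpow_eq {t : ℝ} (hHor : (hK Q B t).PosDef) (ht : 0 < t) {q : ℝ} (hq : 0 < q)
    (X Y : Fin N → ℝ) :
    (hkernel Q B X Y t) ^ q = ((4 * π) ^ (-(N : ℝ) / 2) * omegaN N / hV Q B t) ^ q *
      Real.exp (-((q / (4 * t)) *
        ((hK Q B t)⁻¹.mulVec (Y - (NormedSpace.exp (t • B)).mulVec X) ⬝ᵥ
          (Y - (NormedSpace.exp (t • B)).mulVec X)))) := by
  rw [hkernel_eq Q B hHor ht, Real.mul_rpow, ← Real.exp_mul]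
  · congr 2
    ring
  · exact div_nonneg (mul_nonneg (Real.rpow_nonneg (by positivity) _)
      (omegaN_pos N).le) (hV_pos Q B ht hHor).le
  · exact (Real.exp_pos _).le

lemma hkernel_rpow_integrable {t : ℝ} (hHor : (hK Q B t).PosDef) (ht : 0 < t) {q : ℝ}
    (hq : 0 < q) (X : Fin N → ℝ) :
    Integrable (fun Y => (hkernel Q B X Y t) ^ q) := by
  simp_rw [hkernel_rpow_eq Q B hHor ht hq X]
  refine Integrable.const_mul ?_ _
  have hc : 0 < q / (4 * t) := by positivity
  exact (gauss_quad_integrable hHor.inv hc).comp_sub_right _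

lemma hkernel_rpow_integral {t : ℝ} (hHor : (hK Q B t).PosDef) (ht : 0 < t) {q : ℝ}
    (hq : 0 < q) (X : Fin N → ℝ) :
    ∫ Y, (hkernel Q B X Y t) ^ q
      = ((4 * π) ^ (-(N : ℝ) / 2) * omegaN N / hV Q B t) ^ q *
        (((4 * π) / q) ^ ((N : ℝ) / 2) * hV Q B t / omegaN N) := by
  simp_rw [hkernel_rpow_eq Q B hHor ht hq X]
  rw [integral_const_mul]
  congr 1
  have hc : 0 < q / (4 * t) := by positivity
  have hshift := integral_sub_right_eq_self (μ := volume)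
    (fun u : Fin N → ℝ => Real.exp (-(q / (4 * t) * ((hK Q B t)⁻¹.mulVec u ⬝ᵥ u))))
    ((NormedSpace.exp (t • B)).mulVec X)
  rw [hshift, gauss_quad_integral hHor.inv hc]
  -- now pure algebra
  have hdetK : 0 < (hK Q B t).det := hHor.det_pos
  have hdetinv : ((hK Q B t)⁻¹).det = ((hK Q B t).det)⁻¹ := by
    rw [Matrix.det_nonsing_inv, Ring.inverse_eq_inv]
  rw [hdetinv, Real.sqrt_inv, div_eq_mul_inv, inv_inv]
  have h1 : π / (q / (4 * t)) = (4 * π / q) * t := by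
    field_simp
  rw [h1, Real.mul_rpow (by positivity) ht.le]
  have h2 : t ^ ((N : ℝ) / 2) = Real.sqrt (t ^ N) := by
    rw [show ((N : ℝ) / 2) = (N : ℝ) * (1 / 2) by ring, Real.rpow_mul ht.le,
      Real.rpow_natCast, ← Real.sqrt_eq_rpow]
  rw [h2, mul_assoc, ← Real.sqrt_mul (by positivity)]
  have h3 : t ^ N * (hK Q B t).det = (t • hK Q B t).det := by
    rw [Matrix.det_smul, Fintype.card_fin]
  rw [h3]
  rw [hV]
  have hω : omegaN N ≠ 0 := (omegaN_pos N).ne'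
  field_simp

lemma hkernel_memLp {t : ℝ} (hHor : (hK Q B t).PosDef) (ht : 0 < t) {q : ℝ}
    (hq : 0 < q) (X : Fin N → ℝ) :
    MemLp (fun Y => hkernel Q B X Y t) (ENNReal.ofReal q) volume := by
  have hsm : AEStronglyMeasurable (fun Y => hkernel Q B X Y t) volume :=
    (hkernel_continuous Q B X t).aestronglyMeasurable
  have ne0 : (ENNReal.ofReal q) ≠ 0 := by simp [ENNReal.ofReal_eq_zero, not_le, hq]
  have h1 : (ENNReal.ofReal q) / (ENNReal.ofReal q) = 1 :=
    ENNReal.div_self ne0 ENNReal.ofReal_ne_top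
  have H : MemLp (fun Y => ‖hkernel Q B X Y t‖ ^ (ENNReal.ofReal q).toReal)
      (ENNReal.ofReal q / ENNReal.ofReal q) volume := by
    rw [h1, memLp_one_iff_integrable]
    refine (hkernel_rpow_integrable Q B hHor ht hq X).congr ?_
    filter_upwards with Y
    rw [ENNReal.toReal_ofReal hq.le, Real.norm_of_nonneg (hkernel_nonneg Q B X Y t)]
  exact (memLp_norm_rpow_iff hsm ne0 ENNReal.ofReal_ne_top).mp H

end main


/-- `Lᵖ → L^∞` ultracontractivity of the Hörmander semigroup. -/
theorem hP_ultracontractive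
    (N : ℕ) (hN : 2 ≤ N) (Q B : Matrix (Fin N) (Fin N) ℝ)
    (hQ : Q.PosSemidef)
    (hHor : ∀ t > 0, (hK Q B t).PosDef)
    (p : ℝ) (hp : 1 ≤ p) :
    ∃ c > (0:ℝ), ∀ f : (Fin N → ℝ) → ℝ, MemLp f (ENNReal.ofReal p) volume →
      ∀ X : Fin N → ℝ, ∀ t > (0:ℝ),
        |hP Q B t f X| ≤
          c * hV Q B t ^ (-(1 / p)) * (eLpNorm f (ENNReal.ofReal p) volume).toReal := by
  have hD : 0 < (4 * π) ^ (-(N : ℝ) / 2) * omegaN N :=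
    mul_pos (Real.rpow_pos_of_pos (by positivity) _) (omegaN_pos N)
  set D : ℝ := (4 * π) ^ (-(N : ℝ) / 2) * omegaN N with hD_def
  rcases eq_or_lt_of_le hp with hp1 | hp1
  · -- case p = 1
    subst hp1
    refine ⟨D, hD, ?_⟩
    intro f hf X t ht
    have hKt := hHor t ht
    have hV0 := hV_pos Q B ht hKt
    have hfi : Integrable f volume := by
      rw [← memLp_one_iff_integrable]
      simpa using hf
    have hkb : ∀ Y, hkernel Q B X Y t ≤ D / hV Q B t := by
      intro Y
      rw [hkernel]
      nth_rewrite 2 [show D / hV Q B t = D / hV Q B t * 1 by ring]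
      refine mul_le_mul_of_nonneg_left ?_ (div_nonneg hD.le hV0.le)
      rw [Real.exp_le_one_iff]
      have h1 : (0:ℝ) ≤ (hm Q B t X Y) ^ 2 := sq_nonneg _
      have h2 : (0:ℝ) < 4 * t := by linarith
      exact div_nonpos_of_nonpos_of_nonneg (by linarith) h2.le
    have hint : Integrable (fun Y => hkernel Q B X Y t * f Y) volume := by
      refine Integrable.mono ((hfi.norm).const_mul (D / hV Q B t)) ?_ ?_
      · exact (hkernel_continuous Q B X t).aestronglyMeasurable.mul hf.1
      · filter_upwards with Y
        rw [norm_mul, Real.norm_of_nonneg (hkernel_nonneg Q B X Y t),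
          Real.norm_of_nonneg (mul_nonneg (div_nonneg hD.le hV0.le) (norm_nonneg _))]
        exact mul_le_mul_of_nonneg_right (hkb Y) (norm_nonneg _)
    have hnormint : ∫ Y, ‖f Y‖ = (eLpNorm f (ENNReal.ofReal 1) volume).toReal := by
      have h1 : (ENNReal.ofReal (1:ℝ)) ≠ 0 := by simp
      have heq := hf.eLpNorm_eq_integral_rpow_norm h1 ENNReal.ofReal_ne_top
      rw [heq, ENNReal.toReal_ofReal (Real.rpow_nonneg
        (integral_nonneg fun Y => Real.rpow_nonneg (norm_nonneg _) _) _)]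
      simp [ENNReal.toReal_ofReal]
    calc |hP Q B t f X| ≤ ∫ Y, ‖hkernel Q B X Y t * f Y‖ := by
          rw [hP, ← Real.norm_eq_abs]
          exact norm_integral_le_integral_norm _
      _ ≤ ∫ Y, D / hV Q B t * ‖f Y‖ := by
          refine integral_mono hint.norm ((hfi.norm).const_mul _) fun Y => ?_
          rw [norm_mul, Real.norm_of_nonneg (hkernel_nonneg Q B X Y t)]
          exact mul_le_mul_of_nonneg_right (hkb Y) (norm_nonneg _)
      _ = D / hV Q B t * ∫ Y, ‖f Y‖ := integral_const_mul _ _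
      _ = D * hV Q B t ^ (-(1 / (1:ℝ))) * (eLpNorm f (ENNReal.ofReal 1) volume).toReal := by
          rw [hnormint, show (-(1/(1:ℝ))) = (-1 : ℝ) by norm_num, Real.rpow_neg_one,
            div_eq_mul_inv]
  · -- case 1 < p
    have hp0 : 0 < p := lt_trans one_pos hp1
    set q : ℝ := p / (p - 1) with hq_def
    have hpq : p.HolderConjugate q := (Real.holderConjugate_iff_eq_conjExponent hp1).2 hq_def
    have hq0 : 0 < q := hpq.symm.pos
    have hC2 : 0 < ((4 * π) / q) ^ ((N:ℝ)/2) / omegaN N :=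
      div_pos (Real.rpow_pos_of_pos (by positivity) _) (omegaN_pos N)
    refine ⟨D * (((4 * π) / q) ^ ((N:ℝ)/2) / omegaN N) ^ (1/q),
      mul_pos hD (Real.rpow_pos_of_pos hC2 _), ?_⟩
    intro f hf X t ht
    have hKt := hHor t ht
    have hV0 := hV_pos Q B ht hKt
    have hfℒ : MemLp (fun Y => |f Y|) (ENNReal.ofReal p) volume := by
      simpa only [Real.norm_eq_abs] using hf.norm
    have hkℒ := hkernel_memLp Q B hKt ht hq0 X
    have hH := integral_mul_le_Lp_mul_Lq_of_nonneg (μ := volume) hpq.symm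
      (f := fun Y => hkernel Q B X Y t) (g := fun Y => |f Y|)
      (Filter.Eventually.of_forall fun Y => hkernel_nonneg Q B X Y t)
      (Filter.Eventually.of_forall fun Y => abs_nonneg _) hkℒ hfℒ
    have h0 : |hP Q B t f X| ≤ ∫ Y, hkernel Q B X Y t * |f Y| := by
      rw [hP, ← Real.norm_eq_abs]
      refine (norm_integral_le_integral_norm _).trans_eq ?_
      refine integral_congr_ae (Filter.Eventually.of_forall fun Y => ?_)
      show ‖hkernel Q B X Y t * f Y‖ = hkernel Q B X Y t * |f Y|
      rw [Real.norm_eq_abs, abs_mul, abs_of_nonneg (hkernel_nonneg Q B X Y t)]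
    have e1 : 1/q - 1 = -(1/p) := by
      have := hpq.inv_add_inv_eq_one
      rw [one_div, one_div]
      linarith
    have hIq : (∫ Y, hkernel Q B X Y t ^ q) ^ (1/q)
        = (D * (((4 * π) / q) ^ ((N:ℝ)/2) / omegaN N) ^ (1/q)) * hV Q B t ^ (-(1/p)) := by
      rw [hkernel_rpow_integral Q B hKt ht hq0 X]
      have hDV : (0:ℝ) ≤ D / hV Q B t := div_nonneg hD.le hV0.le
      rw [Real.mul_rpow (Real.rpow_nonneg hDV q)
        (div_nonneg (mul_nonneg (Real.rpow_nonneg (by positivity) _) hV0.le) (omegaN_pos N).le)]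
      rw [← Real.rpow_mul hDV, mul_one_div_cancel hq0.ne', Real.rpow_one]
      rw [show ((4 * π / q) ^ ((N:ℝ)/2) * hV Q B t / omegaN N)
          = ((4 * π / q) ^ ((N:ℝ)/2) / omegaN N) * hV Q B t by ring]
      rw [Real.mul_rpow hC2.le hV0.le]
      rw [← e1, Real.rpow_sub hV0, Real.rpow_one]
      field_simp
    have hf_eq : (∫ Y, |f Y| ^ p) ^ (1/p) = (eLpNorm f (ENNReal.ofReal p) volume).toReal := by
      have h1 : (ENNReal.ofReal p) ≠ 0 := by simp [hp0, hp0.le, ENNReal.ofReal_eq_zero, not_le]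
      have heq := hf.eLpNorm_eq_integral_rpow_norm h1 ENNReal.ofReal_ne_top
      rw [heq, ENNReal.toReal_ofReal (Real.rpow_nonneg
        (integral_nonneg fun Y => Real.rpow_nonneg (norm_nonneg _) _) _)]
      simp only [ENNReal.toReal_ofReal hp0.le, Real.norm_eq_abs, one_div]
    calc |hP Q B t f X| ≤ ∫ Y, hkernel Q B X Y t * |f Y| := h0
      _ ≤ (∫ Y, hkernel Q B X Y t ^ q) ^ (1/q) * (∫ Y, |f Y| ^ p) ^ (1/p) := by
          have := hH
          linarith [hH]
      _ = D * (((4 * π) / q) ^ ((N:ℝ)/2) / omegaN N) ^ (1/q) * hV Q B t ^ (-(1/p)) *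
          (eLpNorm f (ENNReal.ofReal p) volume).toReal := by
          rw [hIq, hf_eq]
end
end
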